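/- arXiv:2508.05789 — 5 statements merged into one kernel-verified Lean document; each statement's English description precedes it below -/
import Mathlib

section
/- For every m with 1 ≤ 2m ≤ M and every k ≥ 1, the charges satisfy the recursion Q_{2m}^{(k)} = Q_{2m−1}^{(k)} + h_{2m} Q_{2m−3}^{(k−1)} + ħ_{2m+1} Q_{2m−4}^{(k−1)} + h_{2m−2} ħ_{2m+1} Q_{2m−6}^{(k−2)} + h_{2m−5} ħ_{2m+1} Q_{2m−8}^{(k−2)}, where any term containing a generator with non-positive index is zero. -/
namespace FFD

variable {A : Type*} [Ring A] [Algebra ℂ A]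

/-- Index pattern for which the extra generator `ħ_{2m+1}` (with parameter `m`)
anticommutes with the plain generator `h l`. -/
def MixedRel (m l : ℤ) : Prop :=
  l = 2 * m - 5 ∨ l = 2 * m - 3 ∨ l = 2 * m - 1 ∨ l = 2 * m + 1 ∨ l = 2 * m ∨ l = 2 * m + 2

/-- Vertex codes of the frustration graph: the even code `2 * i` encodes the plain vertex `i`
(generator `h i`), the odd code `2 * m + 1` encodes the barred vertex `2m+1` (generator
`ħ_{2m+1}`).  Two codes are adjacent exactly when the corresponding generators anticommute. -/
def Adj (v w : ℕ) : Prop :=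
  if v % 2 = 0 then
    if w % 2 = 0 then
      1 ≤ |((v / 2 : ℕ) : ℤ) - ((w / 2 : ℕ) : ℤ)| ∧
        |((v / 2 : ℕ) : ℤ) - ((w / 2 : ℕ) : ℤ)| ≤ 2
    else MixedRel ((w / 2 : ℕ) : ℤ) ((v / 2 : ℕ) : ℤ)
  else
    if w % 2 = 0 then MixedRel ((v / 2 : ℕ) : ℤ) ((w / 2 : ℕ) : ℤ)
    else |((v / 2 : ℕ) : ℤ) - ((w / 2 : ℕ) : ℤ)| = 1

/-- The vertex set of the frustration graph `G n`: plain vertices `1, …, n` and barred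
vertices `2m+1` for `0 ≤ m ≤ ⌊n/2⌋`. -/
def memG (n v : ℕ) : Prop :=
  if v % 2 = 0 then 1 ≤ v / 2 ∧ v / 2 ≤ n else v / 2 ≤ n / 2

/-- The generator attached to a vertex code. -/
def gen (h hb : ℤ → A) (v : ℕ) : A :=
  if v % 2 = 0 then h ((v / 2 : ℕ) : ℤ) else hb ((v / 2 : ℕ) : ℤ)

/-- The product `h_S` of the generators of a set of vertex codes, taken in increasing order
of the codes (for an independent set the factors pairwise commute, so the order is
immaterial). -/
def prodGen (h hb : ℤ → A) (S : Finset ℕ) : A :=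
  ((S.sort (· ≤ ·)).map (gen h hb)).prod

/-- The finite collection of all independent sets of cardinality `k` of `G n`. -/
noncomputable def indepSets (n k : ℕ) : Finset (Finset ℕ) :=
  @Finset.filter _
    (fun S => S.card = k ∧ (∀ v ∈ S, memG n v) ∧ ∀ v ∈ S, ∀ w ∈ S, v ≠ w → ¬Adj v w)
    (fun _ => Classical.propDecidable _)
    (Finset.range (2 * n + 2)).powerset

/-- The charge `Q_n^{(k)}`, with the conventions `Q_n^{(0)} = 1`, `Q_n^{(k)} = 0` for `k < 0`,
and `Q_n^{(k)} = 0` for `n < 0`, `k > 0`. -/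
noncomputable def Q (h hb : ℤ → A) (n k : ℤ) : A :=
  if k < 0 then 0
  else if n < 0 then (if k = 0 then 1 else 0)
  else ∑ S ∈ indepSets n.toNat k.toNat, prodGen h hb S

/-- The transfer matrix `T_n(u) = ∑_{k ≥ 0} (-u)^k Q_n^{(k)}` (a finite sum, since
`Q_n^{(k)} = 0` whenever `k` exceeds the number of vertices of `G n`), with `T_n(u) = 1`
for `n ≤ 0`. -/
noncomputable def T (h hb : ℤ → A) (n : ℤ) (u : ℂ) : A :=
  if n ≤ 0 then 1
  else ∑ k ∈ Finset.range (2 * n.toNat + 3), (-u) ^ k • Q h hb n (k : ℤ)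

/-- `A_{2m-1} = h_{2m} h_{2m-3} + h_{2m-2} ħ_{2m+1}`. -/
def AOp (h hb : ℤ → A) (m : ℤ) : A :=
  h (2 * m) * h (2 * m - 3) + h (2 * m - 2) * hb m

/-- `C_{2m} = h_{2m-3} ħ_{2m+3}`. -/
def COp (h hb : ℤ → A) (m : ℤ) : A := h (2 * m - 3) * hb (m + 1)

/-- `𝕊_{2m} = h_{2m-1} + h_{2m} + ħ_{2m+1}`. -/
def SOp (h hb : ℤ → A) (m : ℤ) : A := h (2 * m - 1) + h (2 * m) + hb m

/-- The defining relations of the extended FFD algebra with generators `h_1, …, h_M` and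
`ħ_{2m+1} = hb m` for `0 ≤ m ≤ ⌊M/2⌋`. -/
structure FFDHyp (M : ℤ) (h hb : ℤ → A) (b bb : ℤ → ℂ) : Prop where
  hsq : ∀ m, 1 ≤ m → m ≤ M → h m * h m = (b m) ^ 2 • (1 : A)
  hanti : ∀ m l, 1 ≤ m → m ≤ M → 1 ≤ l → l ≤ M → 1 ≤ |m - l| → |m - l| ≤ 2 →
    h m * h l = -(h l * h m)
  hcomm : ∀ m l, 1 ≤ m → m ≤ M → 1 ≤ l → l ≤ M → 2 < |m - l| →
    h m * h l = h l * h m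
  hbsq : ∀ m, 0 ≤ m → m ≤ M / 2 → hb m * hb m = (bb m) ^ 2 • (1 : A)
  hbanti : ∀ m l, 0 ≤ m → m ≤ M / 2 → 1 ≤ l → l ≤ M → MixedRel m l →
    hb m * h l = -(h l * hb m)
  hbcomm : ∀ m l, 0 ≤ m → m ≤ M / 2 → 1 ≤ l → l ≤ M → ¬MixedRel m l →
    hb m * h l = h l * hb m
  hbbanti : ∀ m m', 0 ≤ m → m ≤ M / 2 → 0 ≤ m' → m' ≤ M / 2 → |m - m'| = 1 →
    hb m * hb m' = -(hb m' * hb m)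
  hbbcomm : ∀ m m', 0 ≤ m → m ≤ M / 2 → 0 ≤ m' → m' ≤ M / 2 → m ≠ m' → |m - m'| ≠ 1 →
    hb m * hb m' = hb m' * hb m

/-- The extra relation `A_{2m-1} C_{2m+2} = C_{2m} A_{2m+3}` for all `1 < m < ⌊M/2⌋ - 1`. -/
def ACRel (M : ℤ) (h hb : ℤ → A) : Prop :=
  ∀ m : ℤ, 1 < m → m < M / 2 - 1 →
    AOp h hb m * COp h hb (m + 1) = COp h hb m * AOp h hb (m + 2)

/-- The assumption that the products around the even holes are the scalars `μ_{2m-1}`. -/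
def MuScalar (M : ℤ) (h hb : ℤ → A) (μ : ℤ → ℂ) : Prop :=
  ∀ m : ℤ, 1 < m → m ≤ M / 2 →
    h (2 * m - 3) * h (2 * m) * h (2 * m - 2) * hb m = μ m • (1 : A)

/-- The assumption that `𝕊_{2m}²`, `A_{2m-1}²`, `C_{2m}²` are the scalars `s_{2m}`,
`a_{2m-1}`, `c_{2m}` times the identity, the coefficients attached to generators of
non-positive index being set to zero. -/
structure ScalarSquares (M : ℤ) (h hb : ℤ → A) (s a c : ℤ → ℂ) : Prop where
  hs : ∀ m : ℤ, 1 ≤ m → 2 * m ≤ M → SOp h hb m * SOp h hb m = s (2 * m) • (1 : A)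
  hszero : ∀ m : ℤ, m ≤ 0 → s (2 * m) = 0
  ha : ∀ m : ℤ, 2 ≤ m → 2 * m ≤ M → AOp h hb m * AOp h hb m = a (2 * m - 1) • (1 : A)
  hazero : ∀ m : ℤ, m ≤ 1 → a (2 * m - 1) = 0
  hc : ∀ m : ℤ, 2 ≤ m → 2 * m + 2 ≤ M → COp h hb m * COp h hb m = c (2 * m) • (1 : A)
  hczero : ∀ m : ℤ, m ≤ 1 → c (2 * m) = 0

/-- The explicitly defined polynomial sequence `P_n(z)`:
`P_n = 1` for `n ≤ 0`, `P_{2m-1}(z) = P_{2m-2}(z) - b_{2m-1}² z P_{2m-4}(z)` and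
`P_{2m}(z) = P_{2m-2}(z) - s_{2m} z P_{2m-4}(z) + a_{2m-1} z² P_{2m-6}(z)
- c_{2m-2} z² P_{2m-8}(z)`. -/
structure PolyRec (b s a c : ℤ → ℂ) (P : ℤ → ℂ → ℂ) : Prop where
  base : ∀ n : ℤ, n ≤ 0 → ∀ z : ℂ, P n z = 1
  odd : ∀ m : ℤ, 1 ≤ m → ∀ z : ℂ, P (2 * m - 1) z =
    P (2 * m - 2) z - (b (2 * m - 1)) ^ 2 * z * P (2 * m - 4) z
  even : ∀ m : ℤ, 1 ≤ m → ∀ z : ℂ, P (2 * m) z =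
    P (2 * m - 2) z - s (2 * m) * z * P (2 * m - 4) z
      + a (2 * m - 1) * z ^ 2 * P (2 * m - 6) z
      - c (2 * m - 2) * z ^ 2 * P (2 * m - 8) z

/-- `r_M`: equal to `1` for odd `M` and to `2` for even `M`. -/
def rM (M : ℤ) : ℤ := if M % 2 = 1 then 1 else 2

/-- The sum `𝕊` of the generators of the right-end simplicial clique:
`h_M` for odd `M`, and `h_{M-1} + h_M + ħ_{M+1}` for even `M`. -/
def SEdge (M : ℤ) (h hb : ℤ → A) : A :=
  if M % 2 = 1 then h M else h (M - 1) + h M + hb (M / 2)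

/-- The right-end simplicial mode `χ`: it squares to `1`, anticommutes with the generators
of the right-end simplicial clique and commutes with all the other generators. -/
structure EdgeMode (M : ℤ) (h hb : ℤ → A) (χ : A) : Prop where
  sq : χ * χ = 1
  odd : M % 2 = 1 →
    (χ * h M = -(h M * χ)) ∧
    (∀ l : ℤ, 1 ≤ l → l < M → χ * h l = h l * χ) ∧
    (∀ m : ℤ, 0 ≤ m → m ≤ M / 2 → χ * hb m = hb m * χ)
  even : M % 2 = 0 →
    (χ * h (M - 1) = -(h (M - 1) * χ)) ∧
    (χ * h M = -(h M * χ)) ∧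
    (χ * hb (M / 2) = -(hb (M / 2) * χ)) ∧
    (∀ l : ℤ, 1 ≤ l → l ≤ M - 2 → χ * h l = h l * χ) ∧
    (∀ m : ℤ, 0 ≤ m → m < M / 2 → χ * hb m = hb m * χ)


/-! ### Auxiliary infrastructure for the proof of `charge_recursion_even` -/

set_option linter.unusedSectionVars false

lemma abs_pair_iff (a : ℤ) : (1 ≤ |a| ∧ |a| ≤ 2) ↔ (a = 1 ∨ a = 2 ∨ a = -1 ∨ a = -2) := by
  rcases abs_cases a with ⟨h1, _⟩ | ⟨h1, _⟩ <;> rw [h1] <;> omega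

lemma abs_one_iff (a : ℤ) : (|a| = 1) ↔ (a = 1 ∨ a = -1) := by
  rcases abs_cases a with ⟨h1, _⟩ | ⟨h1, _⟩ <;> rw [h1] <;> omega

/-- Vertex set predicate with an integer bound (empty for negative bound). -/
def memB (t : ℤ) (v : ℕ) : Prop :=
  if v % 2 = 0 then 1 ≤ ((v / 2 : ℕ) : ℤ) ∧ ((v / 2 : ℕ) : ℤ) ≤ t
  else 2 * ((v / 2 : ℕ) : ℤ) ≤ t

/-- Boundedness of the index of a vertex code. -/
def Ok (M : ℤ) (v : ℕ) : Prop :=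
  if v % 2 = 0 then ((v / 2 : ℕ) : ℤ) ≤ M else 2 * ((v / 2 : ℕ) : ℤ) ≤ M

/-- Independent sets of cardinality `k` for an arbitrary vertex predicate. -/
noncomputable def indF (P : ℕ → Prop) (N k : ℕ) : Finset (Finset ℕ) :=
  @Finset.filter _
    (fun S => S.card = k ∧ (∀ v ∈ S, P v) ∧ ∀ v ∈ S, ∀ w ∈ S, v ≠ w → ¬Adj v w)
    (fun _ => Classical.propDecidable _)
    (Finset.range N).powerset

lemma mem_indF {P : ℕ → Prop} {N k : ℕ} {S : Finset ℕ} :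
    S ∈ indF P N k ↔ (S ⊆ Finset.range N ∧ S.card = k ∧ (∀ v ∈ S, P v) ∧
      ∀ v ∈ S, ∀ w ∈ S, v ≠ w → ¬Adj v w) := by
  simp only [indF, Finset.mem_filter, Finset.mem_powerset]

noncomputable def QP (h hb : ℤ → A) (P : ℕ → Prop) (N k : ℕ) : A :=
  ∑ S ∈ indF P N k, prodGen h hb S

lemma indF_zero (P : ℕ → Prop) (N : ℕ) : indF P N 0 = {∅} := by
  ext S
  rw [mem_indF, Finset.mem_singleton]
  constructor
  · rintro ⟨-, hc, -, -⟩; exact Finset.card_eq_zero.1 hc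
  · rintro rfl
    refine ⟨Finset.empty_subset _, Finset.card_empty, ?_, ?_⟩ <;> intro v hv <;>
      exact absurd hv (Finset.notMem_empty v)

lemma prodGen_empty (h hb : ℤ → A) : prodGen h hb (∅ : Finset ℕ) = 1 := by
  simp [prodGen]

lemma QP_zero (h hb : ℤ → A) (P : ℕ → Prop) (N : ℕ) : QP h hb P N 0 = 1 := by
  unfold QP
  rw [indF_zero, Finset.sum_singleton, prodGen_empty]

lemma QP_empty (h hb : ℤ → A) (P : ℕ → Prop) (N k : ℕ) (hP : ∀ v, ¬ P v) :
    QP h hb P N k = if k = 0 then 1 else 0 := by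
  by_cases hk : k = 0
  · subst hk; rw [if_pos rfl]; exact QP_zero h hb P N
  · rw [if_neg hk]
    unfold QP
    have he : indF P N k = ∅ := by
      ext S; rw [mem_indF]
      simp only [Finset.notMem_empty, iff_false]
      rintro ⟨-, hc, hm, -⟩
      obtain ⟨v, hv⟩ := Finset.card_pos.1 (by omega : 0 < S.card)
      exact hP v (hm v hv)
    rw [he, Finset.sum_empty]

lemma QP_congr (h hb : ℤ → A) {P P' : ℕ → Prop} (hPP : ∀ v, P v ↔ P' v) (N k : ℕ) :
    QP h hb P N k = QP h hb P' N k := by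
  unfold QP
  have he : indF P N k = indF P' N k := by
    ext S; rw [mem_indF, mem_indF]
    constructor
    · rintro ⟨h1, h2, h3, h4⟩
      exact ⟨h1, h2, fun v hv => (hPP v).1 (h3 v hv), h4⟩
    · rintro ⟨h1, h2, h3, h4⟩
      exact ⟨h1, h2, fun v hv => (hPP v).2 (h3 v hv), h4⟩
  rw [he]

lemma Q_eq_QP (h hb : ℤ → A) (n : ℤ) (k N : ℕ)
    (hN : ∀ v, memB n v → v < N) :
    Q h hb n (k : ℤ) = QP h hb (memB n) N k := by
  by_cases hn : n < 0
  · have hPempty : ∀ v, ¬ memB n v := by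
      intro v; unfold memB; split_ifs <;> omega
    rw [QP_empty h hb _ N k hPempty]
    unfold Q
    rw [if_neg (by omega), if_pos hn]
    by_cases hk : k = 0 <;> simp [hk]
  · unfold Q
    rw [if_neg (by omega), if_neg hn]
    have hmg : ∀ v, memB n v ↔ memG n.toNat v := by
      intro v; unfold memB memG; split_ifs <;> omega
    have hless : ∀ v, memG n.toNat v → v < 2 * n.toNat + 2 := by
      intro v; unfold memG; split_ifs <;> omega
    have hset : indepSets n.toNat ((k : ℤ)).toNat = indF (memB n) N k := by
      have htk : ((k : ℤ)).toNat = k := by omega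
      rw [htk]
      ext S
      rw [mem_indF]
      simp only [indepSets, Finset.mem_filter, Finset.mem_powerset]
      constructor
      · rintro ⟨-, h1, h2, h3⟩
        exact ⟨fun v hv => Finset.mem_range.2 (hN v ((hmg v).2 (h2 v hv))), h1,
          fun v hv => (hmg v).2 (h2 v hv), h3⟩
      · rintro ⟨-, h1, h2, h3⟩
        exact ⟨fun v hv => Finset.mem_range.2 (hless v ((hmg v).1 (h2 v hv))), h1,
          fun v hv => (hmg v).1 (h2 v hv), h3⟩
    rw [hset]
    rfl

lemma prodGen_insert (h hb : ℤ → A) {c : ℕ} {S : Finset ℕ} (hc : c ∉ S)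
    (hcomm : ∀ v ∈ S, Commute (gen h hb c) (gen h hb v))
    (hpair : ∀ v ∈ S, ∀ w ∈ S, Commute (gen h hb v) (gen h hb w)) :
    prodGen h hb (insert c S) = gen h hb c * prodGen h hb S := by
  unfold prodGen
  have hperm : List.Perm ((insert c S).sort (· ≤ ·)) (c :: S.sort (· ≤ ·)) :=
    ((Finset.sort_perm_toList _ _).trans (Finset.toList_insert hc)).trans
      ((Finset.sort_perm_toList _ _).symm.cons c)
  have hperm2 : List.Perm (((insert c S).sort (· ≤ ·)).map (gen h hb))
      (gen h hb c :: (S.sort (· ≤ ·)).map (gen h hb)) := hperm.map (gen h hb)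
  have hpw : (gen h hb c :: (S.sort (· ≤ ·)).map (gen h hb)).Pairwise Commute := by
    rw [List.pairwise_cons]
    constructor
    · intro x hx
      obtain ⟨v, hv, rfl⟩ := List.mem_map.1 hx
      exact hcomm v ((Finset.mem_sort _).1 hv)
    · rw [List.pairwise_map]
      exact List.pairwise_of_forall_mem_list fun a ha b hb' =>
        hpair a ((Finset.mem_sort _).1 ha) b ((Finset.mem_sort _).1 hb')
  rw [← hperm2.symm.prod_eq' hpw, List.prod_cons]

lemma prodGen_eq_zero (h hb : ℤ → A) {c : ℕ} {S : Finset ℕ} (hc : c ∈ S)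
    (h0 : gen h hb c = 0) : prodGen h hb S = 0 := by
  unfold prodGen
  apply List.prod_eq_zero
  rw [← h0]
  exact List.mem_map_of_mem ((Finset.mem_sort _).2 hc)

lemma commute_of_not_adj (M : ℤ) (h hb : ℤ → A) (b bb : ℤ → ℂ)
    (hyp : FFDHyp M h hb b bb) (hzero : ∀ i : ℤ, i ≤ 0 → h i = 0)
    {v w : ℕ} (hv : Ok M v) (hw : Ok M w)
    (hvw : ¬Adj v w) (hwv : ¬Adj w v) :
    Commute (gen h hb v) (gen h hb w) := by
  unfold Ok at hv hw
  unfold Adj at hvw hwv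
  unfold gen
  rcases Nat.mod_two_eq_zero_or_one v with hv2 | hv2 <;>
    rcases Nat.mod_two_eq_zero_or_one w with hw2 | hw2
  · -- even / even
    rw [if_pos hv2] at hv hvw ⊢
    rw [if_pos hw2] at hw ⊢
    rw [if_pos hw2] at hvw
    by_cases hi : ((v / 2 : ℕ) : ℤ) = 0
    · rw [hi, hzero 0 le_rfl]; exact Commute.zero_left _
    by_cases hl : ((w / 2 : ℕ) : ℤ) = 0
    · rw [hl, hzero 0 le_rfl]; exact Commute.zero_right _
    by_cases hE : ((v / 2 : ℕ) : ℤ) = ((w / 2 : ℕ) : ℤ)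
    · rw [hE]
    · have habs : 2 < |((v / 2 : ℕ) : ℤ) - ((w / 2 : ℕ) : ℤ)| := by
        rcases abs_cases (((v / 2 : ℕ) : ℤ) - ((w / 2 : ℕ) : ℤ)) with ⟨h1, _⟩ | ⟨h1, _⟩ <;>
          rw [h1] at hvw ⊢ <;> omega
      exact hyp.hcomm _ _ (by omega) hv (by omega) hw habs
  · -- even / odd
    rw [if_pos hv2] at hv hvw ⊢
    rw [if_neg (by omega)] at hw ⊢
    rw [if_neg (by omega)] at hvw
    by_cases hi : ((v / 2 : ℕ) : ℤ) = 0
    · rw [hi, hzero 0 le_rfl]; exact Commute.zero_left _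
    · exact (hyp.hbcomm _ _ (Int.natCast_nonneg _) (by omega) (by omega) hv hvw).symm
  · -- odd / even
    rw [if_neg (by omega)] at hv hvw ⊢
    rw [if_pos hw2] at hw ⊢
    rw [if_pos hw2] at hvw
    by_cases hi : ((w / 2 : ℕ) : ℤ) = 0
    · rw [hi, hzero 0 le_rfl]; exact Commute.zero_right _
    · exact hyp.hbcomm _ _ (Int.natCast_nonneg _) (by omega) (by omega) hw hvw
  · -- odd / odd
    rw [if_neg (by omega)] at hv hvw ⊢
    rw [if_neg (by omega)] at hw ⊢
    rw [if_neg (by omega)] at hvw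
    by_cases hE : ((v / 2 : ℕ) : ℤ) = ((w / 2 : ℕ) : ℤ)
    · rw [hE]
    · exact hyp.hbbcomm _ _ (Int.natCast_nonneg _) (by omega) (Int.natCast_nonneg _)
        (by omega) hE hvw

lemma QP_split (h hb : ℤ → A) (P : ℕ → Prop) (N k : ℕ) (c : ℕ)
    (hcN : c < N) (hc : P c ∨ gen h hb c = 0) :
    QP h hb P N (k + 1) = QP h hb (fun v => P v ∧ v ≠ c) N (k + 1)
      + ∑ S ∈ indF (fun v => (P v ∧ v ≠ c) ∧ ¬Adj c v ∧ ¬Adj v c) N k,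
          prodGen h hb (insert c S) := by
  classical
  by_cases hPc : P c
  · have hsplit := Finset.sum_filter_add_sum_filter_not (indF P N (k + 1))
      (fun S => c ∈ S) (prodGen h hb)
    have e1 : (indF P N (k + 1)).filter (fun S => c ∉ S)
        = indF (fun v => P v ∧ v ≠ c) N (k + 1) := by
      ext S
      simp only [Finset.mem_filter, mem_indF]
      constructor
      · rintro ⟨⟨hr, h1, h2, h3⟩, hcS⟩
        exact ⟨hr, h1, fun v hv => ⟨h2 v hv, fun he => hcS (he ▸ hv)⟩, h3⟩
      · rintro ⟨hr, h1, h2, h3⟩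
        exact ⟨⟨hr, h1, fun v hv => (h2 v hv).1, h3⟩, fun hcS => (h2 c hcS).2 rfl⟩
    have e2 : ∑ S ∈ (indF P N (k + 1)).filter (fun S => c ∈ S), prodGen h hb S
        = ∑ S ∈ indF (fun v => (P v ∧ v ≠ c) ∧ ¬Adj c v ∧ ¬Adj v c) N k,
            prodGen h hb (insert c S) := by
      apply Finset.sum_nbij' (fun S => S.erase c) (fun S => insert c S)
      · intro S hS
        rw [Finset.mem_filter, mem_indF] at hS
        obtain ⟨⟨hr, hcard, hmem, hind⟩, hcS⟩ := hS
        rw [mem_indF]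
        refine ⟨(Finset.erase_subset _ _).trans hr, ?_, ?_, ?_⟩
        · rw [Finset.card_erase_of_mem hcS, hcard]; omega
        · intro v hv
          have hvS := Finset.mem_of_mem_erase hv
          have hvc := Finset.ne_of_mem_erase hv
          exact ⟨⟨hmem v hvS, hvc⟩, hind c hcS v hvS (Ne.symm hvc), hind v hvS c hcS hvc⟩
        · intro v hv w hw hvw
          exact hind v (Finset.mem_of_mem_erase hv) w (Finset.mem_of_mem_erase hw) hvw
      · intro S hS
        rw [mem_indF] at hS
        obtain ⟨hr, hcard, hmem, hind⟩ := hS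
        have hcS : c ∉ S := fun hc' => (hmem c hc').1.2 rfl
        rw [Finset.mem_filter, mem_indF]
        refine ⟨⟨?_, ?_, ?_, ?_⟩, Finset.mem_insert_self c S⟩
        · exact Finset.insert_subset (Finset.mem_range.2 hcN) hr
        · rw [Finset.card_insert_of_notMem hcS, hcard]
        · intro v hv
          rcases Finset.mem_insert.1 hv with rfl | hv
          · exact hPc
          · exact (hmem v hv).1.1
        · intro v hv w hw hvw
          rcases Finset.mem_insert.1 hv with hvc | hv'
          · rcases Finset.mem_insert.1 hw with hwc | hw'
            · exact absurd (hvc.trans hwc.symm) hvw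
            · rw [hvc]; exact (hmem w hw').2.1
          · rcases Finset.mem_insert.1 hw with hwc | hw'
            · rw [hwc]; exact (hmem v hv').2.2
            · exact hind v hv' w hw' hvw
      · intro S hS
        exact Finset.insert_erase ((Finset.mem_filter.1 hS).2)
      · intro S hS
        rw [mem_indF] at hS
        exact Finset.erase_insert (fun hc' => (hS.2.2.1 c hc').1.2 rfl)
      · intro S hS
        rw [Finset.insert_erase ((Finset.mem_filter.1 hS).2)]
    have e3 : (indF P N (k + 1)).filter (fun S => ¬ c ∉ S)
        = (indF P N (k + 1)).filter (fun S => c ∈ S) := by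
      apply Finset.filter_congr
      intro S _
      simp
    have := Finset.sum_filter_add_sum_filter_not (indF P N (k + 1))
      (fun S => c ∉ S) (prodGen h hb)
    simp only [QP]
    rw [← this, e1, e3, e2]
  · have hg : gen h hb c = 0 := hc.resolve_left hPc
    have e1 : QP h hb P N (k + 1) = QP h hb (fun v => P v ∧ v ≠ c) N (k + 1) :=
      QP_congr h hb (fun v => ⟨fun hv => ⟨hv, fun (he : v = c) => hPc (he ▸ hv)⟩, And.left⟩)
        N (k + 1)
    have e2 : ∑ S ∈ indF (fun v => (P v ∧ v ≠ c) ∧ ¬Adj c v ∧ ¬Adj v c) N k,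
        prodGen h hb (insert c S) = 0 := by
      apply Finset.sum_eq_zero
      intro S _
      exact prodGen_eq_zero h hb (Finset.mem_insert_self c S) hg
    rw [e1, e2, add_zero]

lemma sum_insert_eq (M : ℤ) (h hb : ℤ → A) (b bb : ℤ → ℂ)
    (hyp : FFDHyp M h hb b bb) (hzero : ∀ i : ℤ, i ≤ 0 → h i = 0)
    (P : ℕ → Prop) (N k c : ℕ)
    (hok : ∀ v, P v → Ok M v) (hokc : Ok M c)
    (hadj : ∀ v, P v → (¬Adj c v ∧ ¬Adj v c) ∧ v ≠ c) :
    ∑ S ∈ indF P N k, prodGen h hb (insert c S) = gen h hb c * QP h hb P N k := by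
  rw [QP, Finset.mul_sum]
  apply Finset.sum_congr rfl
  intro S hS
  rw [mem_indF] at hS
  obtain ⟨-, -, hmem, hind⟩ := hS
  apply prodGen_insert
  · exact fun hcS => (hadj c (hmem c hcS)).2 rfl
  · intro v hv
    exact commute_of_not_adj M h hb b bb hyp hzero hokc (hok v (hmem v hv))
      (hadj v (hmem v hv)).1.1 (hadj v (hmem v hv)).1.2
  · intro v hv w hw
    by_cases hvw : v = w
    · rw [hvw]
    · exact commute_of_not_adj M h hb b bb hyp hzero (hok v (hmem v hv)) (hok w (hmem w hw))
        (hind v hv w hw hvw) (hind w hw v hv (Ne.symm hvw))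
set_option maxHeartbeats 3200000 in
/-- The even-index recursion for the charges:
`Q_{2m}^{(k)} = Q_{2m-1}^{(k)} + h_{2m} Q_{2m-3}^{(k-1)} + ħ_{2m+1} Q_{2m-4}^{(k-1)}
 + h_{2m-2} ħ_{2m+1} Q_{2m-6}^{(k-2)} + h_{2m-5} ħ_{2m+1} Q_{2m-8}^{(k-2)}`,
where any term containing a generator with non-positive index is zero
(hypothesis `hzero`). -/
theorem charge_recursion_even
    {A : Type*} [Ring A] [Algebra ℂ A]
    (M : ℤ) (hM : 4 ≤ M) (h hb : ℤ → A) (b bb : ℤ → ℂ)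
    (hyp : FFDHyp M h hb b bb)
    (hzero : ∀ i : ℤ, i ≤ 0 → h i = 0) :
    ∀ m k : ℤ, 1 ≤ 2 * m → 2 * m ≤ M → 1 ≤ k →
      Q h hb (2 * m) k =
        Q h hb (2 * m - 1) k + h (2 * m) * Q h hb (2 * m - 3) (k - 1)
          + hb m * Q h hb (2 * m - 4) (k - 1)
          + h (2 * m - 2) * hb m * Q h hb (2 * m - 6) (k - 2)
          + h (2 * m - 5) * hb m * Q h hb (2 * m - 8) (k - 2) := by
  intro m k h2m hm2M hk
  obtain ⟨p, hpm⟩ : ∃ p : ℕ, (p : ℤ) = m := ⟨m.toNat, Int.toNat_of_nonneg (by omega)⟩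
  have hp1 : 1 ≤ p := by omega
  obtain ⟨kn, hkn⟩ : ∃ kn : ℕ, k = (kn : ℤ) + 1 := ⟨(k - 1).toNat, by omega⟩
  -- bounds
  have hbound : ∀ t : ℤ, t ≤ 2 * m → ∀ v, memB t v → v < 4 * p + 2 := by
    intro t ht v
    unfold memB
    split_ifs <;> intro hv <;> omega
  have hOkT : ∀ t : ℤ, t ≤ M → ∀ v, memB t v → Ok M v := by
    intro t ht v
    unfold memB Ok
    split_ifs <;> intro hv <;> omega
  -- generator values of the four special codes
  have hg1 : gen h hb (4 * p) = h (2 * m) := by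
    have e1 : (4 * p) % 2 = 0 := by omega
    have e2 : ((4 * p / 2 : ℕ) : ℤ) = 2 * m := by omega
    rw [gen, if_pos e1, e2]
  have hg2 : gen h hb (2 * p + 1) = hb m := by
    have e1 : ¬((2 * p + 1) % 2 = 0) := by omega
    have e2 : (((2 * p + 1) / 2 : ℕ) : ℤ) = m := by omega
    rw [gen, if_neg e1, e2]
  have hga : gen h hb (4 * p - 4) = h (2 * m - 2) := by
    have e1 : (4 * p - 4) % 2 = 0 := by omega
    by_cases hp2 : 2 ≤ p
    · have e2 : (((4 * p - 4) / 2 : ℕ) : ℤ) = 2 * m - 2 := by omega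
      rw [gen, if_pos e1, e2]
    · have e2 : (((4 * p - 4) / 2 : ℕ) : ℤ) = 0 := by omega
      rw [gen, if_pos e1, e2, hzero 0 le_rfl, hzero (2 * m - 2) (by omega)]
  have hgb : gen h hb (4 * p - 10) = h (2 * m - 5) := by
    have e1 : (4 * p - 10) % 2 = 0 := by omega
    by_cases hp3 : 3 ≤ p
    · have e2 : (((4 * p - 10) / 2 : ℕ) : ℤ) = 2 * m - 5 := by omega
      rw [gen, if_pos e1, e2]
    · have e2 : (((4 * p - 10) / 2 : ℕ) : ℤ) = 0 := by omega
      rw [gen, if_pos e1, e2, hzero 0 le_rfl, hzero (2 * m - 5) (by omega)]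
  -- Ok for the special codes
  have hokc1 : Ok M (4 * p) := by unfold Ok; split_ifs <;> omega
  have hokc2 : Ok M (2 * p + 1) := by unfold Ok; split_ifs <;> omega
  have hokca : Ok M (4 * p - 4) := by unfold Ok; split_ifs <;> omega
  have hokcb : Ok M (4 * p - 10) := by unfold Ok; split_ifs <;> omega
  -- membership of the special codes
  have hmem1 : memB (2 * m) (4 * p) := by unfold memB; split_ifs <;> omega
  have hmem2 : memB (2 * m) (2 * p + 1) := by unfold memB; split_ifs <;> omega
  -- commutation facts
  have hcomm2 : hb m * h (2 * m - 2) = h (2 * m - 2) * hb m := by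
    by_cases hp2 : 2 ≤ p
    · exact hyp.hbcomm m (2 * m - 2) (by omega) (by omega) (by omega) (by omega)
        (by unfold MixedRel; omega)
    · rw [hzero (2 * m - 2) (by omega)]; simp
  have hanti5 : hb m * h (2 * m - 5) = -(h (2 * m - 5) * hb m) := by
    by_cases hp3 : 3 ≤ p
    · exact hyp.hbanti m (2 * m - 5) (by omega) (by omega) (by omega) (by omega) (Or.inl rfl)
    · rw [hzero (2 * m - 5) (by omega)]; simp
  -- the pointwise descriptions of the reduced vertex sets
  have I1 : ∀ v, ((memB (2 * m) v ∧ v ≠ 4 * p) ∧ ¬Adj (4 * p) v ∧ ¬Adj v (4 * p))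
      ↔ memB (2 * m - 3) v := by
    intro v
    unfold memB Adj MixedRel
    split_ifs <;> (try simp only [abs_pair_iff, abs_one_iff]) <;> omega
  have I2 : ∀ v, ((memB (2 * m) v ∧ v ≠ 4 * p) ∧ v ≠ 2 * p + 1) ↔ memB (2 * m - 1) v := by
    intro v
    unfold memB
    split_ifs <;> omega
  have I3 : ∀ v, (((((memB (2 * m) v ∧ v ≠ 4 * p) ∧ v ≠ 2 * p + 1) ∧
        ¬Adj (2 * p + 1) v ∧ ¬Adj v (2 * p + 1)) ∧ v ≠ 4 * p - 4) ∧
        ¬Adj (4 * p - 4) v ∧ ¬Adj v (4 * p - 4)) ↔ memB (2 * m - 6) v := by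
    intro v
    unfold memB Adj MixedRel
    split_ifs <;> (try simp only [abs_pair_iff, abs_one_iff]) <;> omega
  have I4 : ∀ v, ((((memB (2 * m) v ∧ v ≠ 4 * p) ∧ v ≠ 2 * p + 1) ∧
        ¬Adj (2 * p + 1) v ∧ ¬Adj v (2 * p + 1)) ∧ v ≠ 4 * p - 4)
      ↔ (memB (2 * m - 4) v ∧ v ≠ 4 * p - 10) := by
    intro v
    unfold memB Adj MixedRel
    split_ifs <;> (try simp only [abs_pair_iff, abs_one_iff]) <;> omega
  have I5 : ∀ v, ((memB (2 * m - 4) v ∧ v ≠ 4 * p - 10) ∧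
        ¬Adj (4 * p - 10) v ∧ ¬Adj v (4 * p - 10)) ↔ memB (2 * m - 8) v := by
    intro v
    unfold memB Adj MixedRel
    split_ifs <;> (try simp only [abs_pair_iff, abs_one_iff]) <;> omega
  -- conversions between Q and QP
  have hQ0 : Q h hb (2 * m) k = QP h hb (memB (2 * m)) (4 * p + 2) (kn + 1) := by
    have hc : k = ((kn + 1 : ℕ) : ℤ) := by omega
    rw [hc]
    exact Q_eq_QP h hb (2 * m) (kn + 1) (4 * p + 2) (hbound (2 * m) (by omega))
  have hQ1 : Q h hb (2 * m - 1) k = QP h hb (memB (2 * m - 1)) (4 * p + 2) (kn + 1) := by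
    have hc : k = ((kn + 1 : ℕ) : ℤ) := by omega
    rw [hc]
    exact Q_eq_QP h hb (2 * m - 1) (kn + 1) (4 * p + 2) (hbound (2 * m - 1) (by omega))
  have hQ3 : Q h hb (2 * m - 3) (k - 1) = QP h hb (memB (2 * m - 3)) (4 * p + 2) kn := by
    have hc : k - 1 = ((kn : ℕ) : ℤ) := by omega
    rw [hc]
    exact Q_eq_QP h hb (2 * m - 3) kn (4 * p + 2) (hbound (2 * m - 3) (by omega))
  have hQ4 : Q h hb (2 * m - 4) (k - 1) = QP h hb (memB (2 * m - 4)) (4 * p + 2) kn := by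
    have hc : k - 1 = ((kn : ℕ) : ℤ) := by omega
    rw [hc]
    exact Q_eq_QP h hb (2 * m - 4) kn (4 * p + 2) (hbound (2 * m - 4) (by omega))
  -- step 1 : split off the vertex `h_{2m}`
  have E1 : QP h hb (memB (2 * m)) (4 * p + 2) (kn + 1)
      = QP h hb (fun v => memB (2 * m) v ∧ v ≠ 4 * p) (4 * p + 2) (kn + 1)
        + h (2 * m) * QP h hb (memB (2 * m - 3)) (4 * p + 2) kn := by
    rw [QP_split h hb (memB (2 * m)) (4 * p + 2) kn (4 * p) (by omega) (Or.inl hmem1)]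
    congr 1
    rw [sum_insert_eq M h hb b bb hyp hzero _ (4 * p + 2) kn (4 * p)
      (fun v hv => hOkT (2 * m) (by omega) v hv.1.1) hokc1 (fun v hv => ⟨hv.2, hv.1.2⟩),
      hg1, QP_congr h hb I1 (4 * p + 2) kn]
  -- step 2 : split off the vertex `ħ_{2m+1}`
  have E2 : QP h hb (fun v => memB (2 * m) v ∧ v ≠ 4 * p) (4 * p + 2) (kn + 1)
      = QP h hb (memB (2 * m - 1)) (4 * p + 2) (kn + 1)
        + hb m * QP h hb (fun v => ((memB (2 * m) v ∧ v ≠ 4 * p) ∧ v ≠ 2 * p + 1) ∧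
            ¬Adj (2 * p + 1) v ∧ ¬Adj v (2 * p + 1)) (4 * p + 2) kn := by
    rw [QP_split h hb (fun v => memB (2 * m) v ∧ v ≠ 4 * p) (4 * p + 2) kn (2 * p + 1)
      (by omega) (Or.inl ⟨hmem2, by omega⟩)]
    congr 1
    · exact QP_congr h hb I2 (4 * p + 2) (kn + 1)
    · rw [sum_insert_eq M h hb b bb hyp hzero _ (4 * p + 2) kn (2 * p + 1)
        (fun v hv => hOkT (2 * m) (by omega) v hv.1.1.1) hokc2 (fun v hv => ⟨hv.2, hv.1.2⟩),
        hg2]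
  -- step 3 : the inner recursion for the barred part
  have E4 : QP h hb (fun v => ((memB (2 * m) v ∧ v ≠ 4 * p) ∧ v ≠ 2 * p + 1) ∧
        ¬Adj (2 * p + 1) v ∧ ¬Adj v (2 * p + 1)) (4 * p + 2) kn
      = QP h hb (memB (2 * m - 4)) (4 * p + 2) kn
        - h (2 * m - 5) * Q h hb (2 * m - 8) (k - 2)
        + h (2 * m - 2) * Q h hb (2 * m - 6) (k - 2) := by
    rcases Nat.eq_zero_or_pos kn with h0 | hpos
    · subst h0
      have hz6 : Q h hb (2 * m - 6) (k - 2) = 0 := by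
        unfold Q; rw [if_pos (by omega)]
      have hz8 : Q h hb (2 * m - 8) (k - 2) = 0 := by
        unfold Q; rw [if_pos (by omega)]
      rw [hz6, hz8, QP_zero, QP_zero]
      simp
    · obtain ⟨jn, rfl⟩ : ∃ jn, kn = jn + 1 := ⟨kn - 1, by omega⟩
      have hQ6 : Q h hb (2 * m - 6) (k - 2) = QP h hb (memB (2 * m - 6)) (4 * p + 2) jn := by
        have hc : k - 2 = ((jn : ℕ) : ℤ) := by omega
        rw [hc]
        exact Q_eq_QP h hb (2 * m - 6) jn (4 * p + 2) (hbound (2 * m - 6) (by omega))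
      have hQ8 : Q h hb (2 * m - 8) (k - 2) = QP h hb (memB (2 * m - 8)) (4 * p + 2) jn := by
        have hc : k - 2 = ((jn : ℕ) : ℤ) := by omega
        rw [hc]
        exact Q_eq_QP h hb (2 * m - 8) jn (4 * p + 2) (hbound (2 * m - 8) (by omega))
      have hca : (fun v => ((memB (2 * m) v ∧ v ≠ 4 * p) ∧ v ≠ 2 * p + 1) ∧
            ¬Adj (2 * p + 1) v ∧ ¬Adj v (2 * p + 1)) (4 * p - 4)
          ∨ gen h hb (4 * p - 4) = 0 := by
        by_cases hp2 : 2 ≤ p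
        · left
          refine ⟨⟨⟨?_, by omega⟩, by omega⟩, ?_, ?_⟩
          · unfold memB; split_ifs <;> omega
          · unfold Adj MixedRel; split_ifs <;> omega
          · unfold Adj MixedRel; split_ifs <;> omega
        · right
          rw [hga]
          exact hzero (2 * m - 2) (by omega)
      have hcb : memB (2 * m - 4) (4 * p - 10) ∨ gen h hb (4 * p - 10) = 0 := by
        by_cases hp3 : 3 ≤ p
        · left; unfold memB; split_ifs <;> omega
        · right
          rw [hgb]
          exact hzero (2 * m - 5) (by omega)
      have step1 : QP h hb (fun v => ((memB (2 * m) v ∧ v ≠ 4 * p) ∧ v ≠ 2 * p + 1) ∧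
            ¬Adj (2 * p + 1) v ∧ ¬Adj v (2 * p + 1)) (4 * p + 2) (jn + 1)
          = QP h hb (fun v => memB (2 * m - 4) v ∧ v ≠ 4 * p - 10) (4 * p + 2) (jn + 1)
            + h (2 * m - 2) * QP h hb (memB (2 * m - 6)) (4 * p + 2) jn := by
        rw [QP_split h hb (fun v => ((memB (2 * m) v ∧ v ≠ 4 * p) ∧ v ≠ 2 * p + 1) ∧
            ¬Adj (2 * p + 1) v ∧ ¬Adj v (2 * p + 1)) (4 * p + 2) jn (4 * p - 4)
          (by omega) hca]
        congr 1
        · exact QP_congr h hb I4 (4 * p + 2) (jn + 1)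
        · rw [sum_insert_eq M h hb b bb hyp hzero _ (4 * p + 2) jn (4 * p - 4)
            (fun v hv => hOkT (2 * m) (by omega) v hv.1.1.1.1.1) hokca
            (fun v hv => ⟨hv.2, hv.1.2⟩), hga, QP_congr h hb I3 (4 * p + 2) jn]
      have step2 : QP h hb (memB (2 * m - 4)) (4 * p + 2) (jn + 1)
          = QP h hb (fun v => memB (2 * m - 4) v ∧ v ≠ 4 * p - 10) (4 * p + 2) (jn + 1)
            + h (2 * m - 5) * QP h hb (memB (2 * m - 8)) (4 * p + 2) jn := by
        rw [QP_split h hb (memB (2 * m - 4)) (4 * p + 2) jn (4 * p - 10) (by omega) hcb]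
        congr 1
        rw [sum_insert_eq M h hb b bb hyp hzero _ (4 * p + 2) jn (4 * p - 10)
          (fun v hv => hOkT (2 * m - 4) (by omega) v hv.1.1) hokcb
          (fun v hv => ⟨hv.2, hv.1.2⟩), hgb, QP_congr h hb I5 (4 * p + 2) jn]
      rw [step1, hQ6, hQ8, step2]
      abel
  -- assemble everything
  rw [hQ0, E1, E2, E4, ← hQ1, ← hQ3, ← hQ4]
  simp only [mul_sub, mul_add, ← mul_assoc]
  rw [hanti5, hcomm2]
  noncomm_ring

end FFD
end

section
/- For every m with 1 ≤ 2m−1 ≤ M and every k ≥ 1, the charges satisfy the recursion Q_{2m−1}^{(k)} = Q_{2m−2}^{(k)} + h_{2m−1} Q_{2m−4}^{(k−1)}. -/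
namespace FFD

variable {A : Type*} [Ring A] [Algebra ℂ A]

/-! ### Auxiliary lemmas for the proof of `charge_recursion_odd` -/

lemma memG_iff {n v : ℕ} : memG n v ↔
    (v % 2 = 0 ∧ 1 ≤ v / 2 ∧ v / 2 ≤ n) ∨ (v % 2 = 1 ∧ v / 2 ≤ n / 2) := by
  unfold memG; split_ifs <;> omega

lemma adj_ee {v w : ℕ} (h1 : v % 2 = 0) (h2 : w % 2 = 0) : Adj v w ↔
    1 ≤ (((v/2 : ℕ) : ℤ) - ((w/2 : ℕ) : ℤ)).natAbs ∧
      (((v/2 : ℕ) : ℤ) - ((w/2 : ℕ) : ℤ)).natAbs ≤ 2 := by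
  unfold Adj
  rw [if_pos h1, if_pos h2, Int.abs_eq_natAbs]
  omega

lemma adj_eo {v w : ℕ} (h1 : v % 2 = 0) (h2 : w % 2 = 1) :
    Adj v w ↔ MixedRel ((w/2 : ℕ) : ℤ) ((v/2 : ℕ) : ℤ) := by
  unfold Adj
  rw [if_pos h1, if_neg (by omega)]

lemma adj_oe {v w : ℕ} (h1 : v % 2 = 1) (h2 : w % 2 = 0) :
    Adj v w ↔ MixedRel ((v/2 : ℕ) : ℤ) ((w/2 : ℕ) : ℤ) := by
  unfold Adj
  rw [if_neg (by omega), if_pos h2]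

lemma adj_oo {v w : ℕ} (h1 : v % 2 = 1) (h2 : w % 2 = 1) :
    Adj v w ↔ (((v/2 : ℕ) : ℤ) - ((w/2 : ℕ) : ℤ)).natAbs = 1 := by
  unfold Adj
  rw [if_neg (by omega), if_neg (by omega), Int.abs_eq_natAbs]
  omega

lemma mem_indepSets {n k : ℕ} {S : Finset ℕ} :
    S ∈ indepSets n k ↔ S ⊆ Finset.range (2*n+2) ∧ S.card = k ∧
      (∀ v ∈ S, memG n v) ∧ ∀ v ∈ S, ∀ w ∈ S, v ≠ w → ¬Adj v w := by
  unfold indepSets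
  simp only [Finset.mem_filter, Finset.mem_powerset]

lemma comm_of_not_adj {A : Type*} [Ring A] [Algebra ℂ A]
    (M : ℤ) (h hb : ℤ → A) (b bb : ℤ → ℂ) (hyp : FFDHyp M h hb b bb)
    (n : ℕ) (hnM : (n : ℤ) ≤ M)
    (v w : ℕ) (hv : memG n v) (hw : memG n w) (hvw : v = w ∨ ¬ Adj v w) :
    gen h hb v * gen h hb w = gen h hb w * gen h hb v := by
  by_cases heq : v = w
  · subst heq; rfl
  have hadj : ¬ Adj v w := hvw.resolve_left heq
  rw [memG_iff] at hv hw
  unfold gen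
  rcases Nat.mod_two_eq_zero_or_one v with hv2 | hv2 <;>
    rcases Nat.mod_two_eq_zero_or_one w with hw2 | hw2
  · -- even / even
    rw [if_pos hv2, if_pos hw2]
    rw [adj_ee hv2 hw2] at hadj
    refine hyp.hcomm _ _ (by omega) (by omega) (by omega) (by omega) ?_
    rw [Int.abs_eq_natAbs]
    have : v / 2 ≠ w / 2 := by omega
    omega
  · -- even / odd
    rw [if_pos hv2, if_neg (by omega)]
    rw [adj_eo hv2 hw2] at hadj
    exact (hyp.hbcomm _ _ (by omega) (by omega) (by omega) (by omega) hadj).symm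
  · -- odd / even
    rw [if_neg (by omega), if_pos hw2]
    rw [adj_oe hv2 hw2] at hadj
    exact hyp.hbcomm _ _ (by omega) (by omega) (by omega) (by omega) hadj
  · -- odd / odd
    rw [if_neg (by omega), if_neg (by omega)]
    rw [adj_oo hv2 hw2] at hadj
    refine hyp.hbbcomm _ _ (by omega) (by omega) (by omega) (by omega) (by omega) ?_
    rw [Int.abs_eq_natAbs]
    omega

lemma prodGen_insert_s3 {A : Type*} [Ring A] [Algebra ℂ A]
    (M : ℤ) (h hb : ℤ → A) (b bb : ℤ → ℂ) (hyp : FFDHyp M h hb b bb)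
    (n k : ℕ) (hnM : (n : ℤ) ≤ M) (v : ℕ) (S : Finset ℕ) (hv : v ∉ S)
    (hmem : insert v S ∈ indepSets n k) :
    prodGen h hb (insert v S) = gen h hb v * prodGen h hb S := by
  obtain ⟨-, -, hmemG, hindep⟩ := mem_indepSets.mp hmem
  have hcomm : ∀ x ∈ insert v S, ∀ y ∈ insert v S,
      Commute (gen h hb x) (gen h hb y) := by
    intro x hx y hy
    by_cases hxy : x = y
    · subst hxy; exact Commute.refl _
    · exact comm_of_not_adj M h hb b bb hyp n hnM x y (hmemG x hx) (hmemG y hy)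
        (Or.inr (hindep x hx y hy hxy))
  have hperm : List.Perm ((insert v S).sort (· ≤ ·)) (v :: S.sort (· ≤ ·)) := by
    refine (Finset.sort_perm_toList _ _).trans ?_
    refine (Finset.toList_insert hv).trans ?_
    exact List.Perm.cons v (Finset.sort_perm_toList _ _).symm
  have hpw : List.Pairwise Commute (((insert v S).sort (· ≤ ·)).map (gen h hb)) := by
    rw [List.pairwise_map]
    refine List.pairwise_of_forall_mem_list ?_
    intro a ha b hb'
    exact hcomm a ((Finset.mem_sort _).mp ha) b ((Finset.mem_sort _).mp hb')
  have := List.Perm.prod_eq' (hperm.map (gen h hb)) hpw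
  unfold prodGen
  rw [this, List.map_cons, List.prod_cons]

lemma indep_filter_notMem (n k : ℕ) (hodd : n % 2 = 1) :
    (indepSets n k).filter (fun S => 2*n ∉ S) = indepSets (n-1) k := by
  ext S
  rw [Finset.mem_filter, mem_indepSets, mem_indepSets]
  constructor
  · rintro ⟨⟨hsub, hcard, hmemG, hindep⟩, hv⟩
    refine ⟨?_, hcard, ?_, hindep⟩
    · intro w hw
      have h1 := hmemG w hw
      have h2 : w ≠ 2*n := fun e => hv (e ▸ hw)
      rw [memG_iff] at h1
      simp only [Finset.mem_range]
      omega
    · intro w hw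
      have h1 := hmemG w hw
      have h2 : w ≠ 2*n := fun e => hv (e ▸ hw)
      rw [memG_iff] at h1 ⊢
      omega
  · rintro ⟨hsub, hcard, hmemG, hindep⟩
    have hns : ∀ w ∈ S, w ≠ 2*n := by
      intro w hw he
      have h1 := hmemG w hw
      rw [memG_iff] at h1
      omega
    refine ⟨⟨?_, hcard, ?_, hindep⟩, fun hc => hns _ hc rfl⟩
    · intro w hw
      have h1 := hmemG w hw
      rw [memG_iff] at h1
      simp only [Finset.mem_range]
      omega
    · intro w hw
      have h1 := hmemG w hw
      rw [memG_iff] at h1 ⊢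
      omega

lemma indep_filter_mem (n k : ℕ) (hodd : n % 2 = 1) (hn3 : 3 ≤ n) (hk : 1 ≤ k) :
    (indepSets n k).filter (fun S => 2*n ∈ S) =
      (indepSets (n-3) (k-1)).image (insert (2*n)) := by
  have h2n : (2*n) % 2 = 0 := by omega
  ext S
  rw [Finset.mem_filter, Finset.mem_image]
  constructor
  · rintro ⟨hS, hvS⟩
    obtain ⟨hsub, hcard, hmemG, hindep⟩ := mem_indepSets.mp hS
    refine ⟨S.erase (2*n), ?_, Finset.insert_erase hvS⟩
    have key : ∀ w ∈ S.erase (2*n), memG (n-3) w ∧ w < 2*(n-3)+2 := by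
      intro w hw
      have hwS := Finset.mem_of_mem_erase hw
      have hne : w ≠ 2*n := Finset.ne_of_mem_erase hw
      have h1 := hmemG w hwS
      have h2 : ¬ Adj w (2*n) := hindep w hwS (2*n) hvS hne
      rw [memG_iff] at h1
      rw [memG_iff]
      rcases Nat.mod_two_eq_zero_or_one w with hw2 | hw2
      · rw [adj_ee hw2 h2n] at h2
        omega
      · rw [adj_oe hw2 h2n] at h2
        simp only [MixedRel] at h2
        omega
    rw [mem_indepSets]
    refine ⟨?_, ?_, ?_, ?_⟩
    · intro w hw
      simp only [Finset.mem_range]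
      exact (key w hw).2
    · rw [Finset.card_erase_of_mem hvS, hcard]
    · intro w hw; exact (key w hw).1
    · intro x hx y hy hxy
      exact hindep x (Finset.mem_of_mem_erase hx) y (Finset.mem_of_mem_erase hy) hxy
  · rintro ⟨S', hS', rfl⟩
    obtain ⟨hsub', hcard', hmemG', hindep'⟩ := mem_indepSets.mp hS'
    have hvnot : 2*n ∉ S' := by
      intro hc
      have h1 := hmemG' _ hc
      rw [memG_iff] at h1
      omega
    have hnadj : ∀ w ∈ S', ¬ Adj (2*n) w ∧ ¬ Adj w (2*n) := by
      intro w hw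
      have h1 := hmemG' w hw
      rw [memG_iff] at h1
      rcases Nat.mod_two_eq_zero_or_one w with hw2 | hw2
      · rw [adj_ee h2n hw2, adj_ee hw2 h2n]
        omega
      · rw [adj_eo h2n hw2, adj_oe hw2 h2n]
        simp only [MixedRel]
        omega
    refine ⟨mem_indepSets.mpr ⟨?_, ?_, ?_, ?_⟩, Finset.mem_insert_self _ _⟩
    · intro w hw
      rcases Finset.mem_insert.mp hw with rfl | hw'
      · simp only [Finset.mem_range]; omega
      · have h1 := hmemG' w hw'
        rw [memG_iff] at h1
        simp only [Finset.mem_range]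
        omega
    · rw [Finset.card_insert_of_notMem hvnot, hcard']; omega
    · intro w hw
      rcases Finset.mem_insert.mp hw with rfl | hw'
      · rw [memG_iff]; omega
      · have h1 := hmemG' w hw'
        rw [memG_iff] at h1 ⊢
        omega
    · intro x hx y hy hxy
      rcases Finset.mem_insert.mp hx with rfl | hx' <;>
        rcases Finset.mem_insert.mp hy with rfl | hy'
      · exact absurd rfl hxy
      · exact (hnadj y hy').1
      · exact (hnadj x hx').2
      · exact hindep' x hx' y hy' hxy

lemma indep_filter_mem_one (k : ℕ) :
    (indepSets 1 k).filter (fun S => 2*1 ∈ S) =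
      if k = 1 then {({2} : Finset ℕ)} else ∅ := by
  ext S
  rw [Finset.mem_filter, mem_indepSets]
  constructor
  · rintro ⟨⟨hsub, hcard, hmemG, hindep⟩, hv⟩
    have hv2 : (2:ℕ) ∈ S := hv
    have hsub2 : ∀ w ∈ S, w = 2 := by
      intro w hw
      have h1 := hmemG w hw
      rw [memG_iff] at h1
      have hw12 : w = 1 ∨ w = 2 := by omega
      rcases hw12 with rfl | rfl
      · exfalso
        refine hindep 2 hv2 1 hw (by norm_num) ?_
        rw [adj_eo rfl rfl]
        norm_num [MixedRel]
      · rfl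
    have hSeq : S = {2} := by
      apply Finset.Subset.antisymm
      · intro w hw
        simp [hsub2 w hw]
      · intro w hw
        simp only [Finset.mem_singleton] at hw
        subst hw
        exact hv2
    subst hSeq
    simp only [Finset.card_singleton] at hcard
    rw [if_pos hcard.symm]
    simp
  · intro hS
    by_cases hk1 : k = 1
    · rw [if_pos hk1] at hS
      simp only [Finset.mem_singleton] at hS
      subst hS
      refine ⟨⟨?_, ?_, ?_, ?_⟩, by norm_num⟩
      · intro w hw
        simp only [Finset.mem_singleton] at hw
        subst hw
        simp
      · simp [hk1]
      · intro w hw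
        simp only [Finset.mem_singleton] at hw
        subst hw
        rw [memG_iff]
        omega
      · intro x hx y hy hxy
        simp only [Finset.mem_singleton] at hx hy
        subst hx; subst hy
        exact absurd rfl hxy
    · rw [if_neg hk1] at hS
      simp at hS

/-- The odd-index recursion for the charges:
`Q_{2m-1}^{(k)} = Q_{2m-2}^{(k)} + h_{2m-1} Q_{2m-4}^{(k-1)}`. -/
theorem charge_recursion_odd
    {A : Type*} [Ring A] [Algebra ℂ A]
    (M : ℤ) (hM : 4 ≤ M) (h hb : ℤ → A) (b bb : ℤ → ℂ)
    (hyp : FFDHyp M h hb b bb) :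
    ∀ m k : ℤ, 1 ≤ 2 * m - 1 → 2 * m - 1 ≤ M → 1 ≤ k →
      Q h hb (2 * m - 1) k =
        Q h hb (2 * m - 2) k + h (2 * m - 1) * Q h hb (2 * m - 4) (k - 1) := by
  intro m k h1 h2 hk
  have hm1 : 1 ≤ m := by omega
  set n : ℕ := (2*m-1).toNat with hndef
  set k' : ℕ := k.toNat with hkdef
  have hnZ : (n : ℤ) = 2*m-1 := by omega
  have hodd : n % 2 = 1 := by omega
  have hkZ : (k' : ℤ) = k := by omega
  have hk1 : 1 ≤ k' := by omega
  have hQ1 : Q h hb (2*m-1) k = ∑ S ∈ indepSets n k', prodGen h hb S := by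
    unfold Q
    rw [if_neg (by omega), if_neg (by omega), ← hndef, ← hkdef]
  have hQ2 : Q h hb (2*m-2) k = ∑ S ∈ indepSets (n-1) k', prodGen h hb S := by
    unfold Q
    rw [if_neg (by omega), if_neg (by omega), ← hkdef,
      show (2*m-2).toNat = n - 1 by omega]
  rw [hQ1, hQ2,
    ← Finset.sum_filter_add_sum_filter_not (indepSets n k') (fun S => 2*n ∈ S)
      (prodGen h hb),
    indep_filter_notMem n k' hodd, add_comm]
  congr 1
  by_cases hm2 : 2 ≤ m
  · -- the generic case `m ≥ 2`
    have hQ3 : Q h hb (2*m-4) (k-1) = ∑ S ∈ indepSets (n-3) (k'-1), prodGen h hb S := by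
      unfold Q
      rw [if_neg (by omega), if_neg (by omega), show (2*m-4).toNat = n - 3 by omega,
        show (k-1).toNat = k' - 1 by omega]
    have hvnot : ∀ S ∈ indepSets (n-3) (k'-1), 2*n ∉ S := by
      intro S hS hc
      have h3 := (mem_indepSets.mp hS).2.2.1 _ hc
      rw [memG_iff] at h3
      omega
    have hinj : ∀ x ∈ indepSets (n-3) (k'-1), ∀ y ∈ indepSets (n-3) (k'-1),
        insert (2*n) x = insert (2*n) y → x = y := by
      intro x hx y hy hxy
      have hxy' := congrArg (fun t => Finset.erase t (2*n)) hxy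
      simpa [Finset.erase_insert (hvnot x hx), Finset.erase_insert (hvnot y hy)]
        using hxy'
    rw [hQ3, indep_filter_mem n k' hodd (by omega) hk1, Finset.sum_image hinj,
      Finset.mul_sum]
    refine Finset.sum_congr rfl ?_
    intro S hS
    have hmemIns : insert (2*n) S ∈ indepSets n k' := by
      have himg : insert (2*n) S ∈ (indepSets (n-3) (k'-1)).image (insert (2*n)) :=
        Finset.mem_image_of_mem _ hS
      rw [← indep_filter_mem n k' hodd (by omega) hk1] at himg
      exact (Finset.mem_filter.mp himg).1
    rw [prodGen_insert_s3 M h hb b bb hyp n k' (by omega) (2*n) S (hvnot S hS) hmemIns]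
    congr 1
    unfold gen
    rw [if_pos (by omega)]
    congr 1
    omega
  · -- the degenerate case `m = 1`
    have hm : m = 1 := by omega
    subst hm
    have hn1 : n = 1 := by omega
    rw [hn1, indep_filter_mem_one k']
    have hQ3 : Q h hb (2*1-4) (k-1) = if k - 1 = 0 then (1:A) else 0 := by
      unfold Q
      rw [if_neg (by omega), if_pos (by norm_num)]
    rw [hQ3]
    by_cases hk1' : k' = 1
    · rw [if_pos hk1', Finset.sum_singleton, if_pos (by omega), mul_one]
      unfold prodGen
      rw [Finset.sort_singleton]
      norm_num [gen]
    · rw [if_neg hk1', Finset.sum_empty, if_neg (by omega), mul_zero]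

end FFD
end

section
/- For every m with 1 < m ≤ ⌊M/2⌋, the element μ := h_{2m−3} h_{2m} h_{2m−2} ħ_{2m+1} is central among the generators: μ commutes with h_l for every 1 ≤ l ≤ M and with ħ_{2l+1} for every 0 ≤ l ≤ ⌊M/2⌋; moreover μ² = b_{2m−3}² b_{2m}² b_{2m−2}² b̄_{2m+1}² · 1. -/
namespace FFD

variable {A : Type*} [Ring A] [Algebra ℂ A]

private lemma swap4' {A : Type*} [Ring A] (x1 x2 x3 x4 y : A) (s1 s2 s3 s4 : ℤ)
    (h1 : x1 * y = s1 • (y * x1)) (h2 : x2 * y = s2 • (y * x2))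
    (h3 : x3 * y = s3 • (y * x3)) (h4 : x4 * y = s4 • (y * x4))
    (hs : s4 * s3 * s2 * s1 = 1) :
    x1 * x2 * x3 * x4 * y = y * (x1 * x2 * x3 * x4) := by
  have e : ∀ (x : A) (s : ℤ), x * y = s • (y * x) → ∀ t, x * (y * t) = s • (y * (x * t)) :=
    fun x s hx t => by rw [← mul_assoc, hx, smul_mul_assoc, mul_assoc]
  calc x1*x2*x3*x4*y = x1*(x2*(x3*(x4*y))) := by simp only [mul_assoc]
  _ = (s4*s3*s2*s1) • (y*(x1*(x2*(x3*x4)))) := by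
      rw [h4]
      simp only [mul_smul_comm]
      rw [e x3 s3 h3]
      simp only [mul_smul_comm]
      rw [e x2 s2 h2]
      simp only [mul_smul_comm]
      rw [e x1 s1 h1]
      simp only [mul_smul_comm, smul_smul]
      ring_nf
  _ = y*(x1*x2*x3*x4) := by rw [hs, one_smul]; simp only [mul_assoc]


/-- For `1 < m ≤ ⌊M/2⌋`, the element
`μ = h_{2m-3} h_{2m} h_{2m-2} ħ_{2m+1}` commutes with every generator, and
`μ² = b_{2m-3}² b_{2m}² b_{2m-2}² b̄_{2m+1}² · 1`. -/
theorem even_hole_product_is_central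
    {A : Type*} [Ring A] [Algebra ℂ A]
    (M : ℤ) (hM : 4 ≤ M) (h hb : ℤ → A) (b bb : ℤ → ℂ)
    (hyp : FFDHyp M h hb b bb) :
    ∀ m : ℤ, 1 < m → m ≤ M / 2 →
      (∀ l : ℤ, 1 ≤ l → l ≤ M →
        (h (2 * m - 3) * h (2 * m) * h (2 * m - 2) * hb m) * h l
          = h l * (h (2 * m - 3) * h (2 * m) * h (2 * m - 2) * hb m)) ∧
      (∀ l : ℤ, 0 ≤ l → l ≤ M / 2 →
        (h (2 * m - 3) * h (2 * m) * h (2 * m - 2) * hb m) * hb l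
          = hb l * (h (2 * m - 3) * h (2 * m) * h (2 * m - 2) * hb m)) ∧
      (h (2 * m - 3) * h (2 * m) * h (2 * m - 2) * hb m)
          * (h (2 * m - 3) * h (2 * m) * h (2 * m - 2) * hb m)
        = ((b (2 * m - 3)) ^ 2 * (b (2 * m)) ^ 2 * (b (2 * m - 2)) ^ 2 * (bb m) ^ 2)
            • (1 : A) := by
  intro m hm1 hm2
  have hmM : 2 * m ≤ M := by omega
  have r1 : (1:ℤ) ≤ 2*m-3 := by omega
  have r2 : 2*m-3 ≤ M := by omega
  have r3 : (1:ℤ) ≤ 2*m := by omega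
  have r5 : (1:ℤ) ≤ 2*m-2 := by omega
  have r6 : 2*m-2 ≤ M := by omega
  have hm0 : (0:ℤ) ≤ m := by omega
  refine ⟨?_, ?_, ?_⟩
  · -- commutes with every h l
    intro l hl1 hl2
    have A1 : ∀ a : ℤ, 1 ≤ a → a ≤ M → a ≠ l → (a - l).natAbs ≤ 2 →
        h a * h l = (-1:ℤ) • (h l * h a) := fun a ha1 ha2 hne hd => by
      rw [neg_one_zsmul]
      exact hyp.hanti a l ha1 ha2 hl1 hl2 (by simp only [Int.abs_eq_natAbs]; omega)
        (by simp only [Int.abs_eq_natAbs]; omega)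
    have C1 : ∀ a : ℤ, 1 ≤ a → a ≤ M → 2 < (a - l).natAbs →
        h a * h l = (1:ℤ) • (h l * h a) := fun a ha1 ha2 hd => by
      rw [one_zsmul]
      exact hyp.hcomm a l ha1 ha2 hl1 hl2 (by simp only [Int.abs_eq_natAbs]; omega)
    have S1 : ∀ a : ℤ, a = l → h a * h l = (1:ℤ) • (h l * h a) := fun a ha => by
      subst ha; rw [one_zsmul]
    have B1 : MixedRel m l → hb m * h l = (-1:ℤ) • (h l * hb m) := fun hr => by
      rw [neg_one_zsmul]; exact hyp.hbanti m l hm0 hm2 hl1 hl2 hr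
    have B1c : ¬MixedRel m l → hb m * h l = (1:ℤ) • (h l * hb m) := fun hr => by
      rw [one_zsmul]; exact hyp.hbcomm m l hm0 hm2 hl1 hl2 hr
    by_cases c1 : l = 2*m-5
    · exact swap4' _ _ _ _ _ _ _ _ _ (A1 _ r1 r2 (by omega) (by omega)) (C1 _ r3 hmM (by omega))
        (C1 _ r5 r6 (by omega)) (B1 (by unfold MixedRel; omega)) (by norm_num)
    by_cases c2 : l = 2*m-4
    · exact swap4' _ _ _ _ _ _ _ _ _ (A1 _ r1 r2 (by omega) (by omega)) (C1 _ r3 hmM (by omega))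
        (A1 _ r5 r6 (by omega) (by omega)) (B1c (by unfold MixedRel; omega)) (by norm_num)
    by_cases c3 : l = 2*m-3
    · exact swap4' _ _ _ _ _ _ _ _ _ (S1 _ (by omega)) (C1 _ r3 hmM (by omega))
        (A1 _ r5 r6 (by omega) (by omega)) (B1 (by unfold MixedRel; omega)) (by norm_num)
    by_cases c4 : l = 2*m-2
    · exact swap4' _ _ _ _ _ _ _ _ _ (A1 _ r1 r2 (by omega) (by omega)) (A1 _ r3 hmM (by omega) (by omega))
        (S1 _ (by omega)) (B1c (by unfold MixedRel; omega)) (by norm_num)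
    by_cases c5 : l = 2*m-1
    · exact swap4' _ _ _ _ _ _ _ _ _ (A1 _ r1 r2 (by omega) (by omega)) (A1 _ r3 hmM (by omega) (by omega))
        (A1 _ r5 r6 (by omega) (by omega)) (B1 (by unfold MixedRel; omega)) (by norm_num)
    by_cases c6 : l = 2*m
    · exact swap4' _ _ _ _ _ _ _ _ _ (C1 _ r1 r2 (by omega)) (S1 _ (by omega))
        (A1 _ r5 r6 (by omega) (by omega)) (B1 (by unfold MixedRel; omega)) (by norm_num)
    by_cases c7 : l = 2*m+1
    · exact swap4' _ _ _ _ _ _ _ _ _ (C1 _ r1 r2 (by omega)) (A1 _ r3 hmM (by omega) (by omega))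
        (C1 _ r5 r6 (by omega)) (B1 (by unfold MixedRel; omega)) (by norm_num)
    by_cases c8 : l = 2*m+2
    · exact swap4' _ _ _ _ _ _ _ _ _ (C1 _ r1 r2 (by omega)) (A1 _ r3 hmM (by omega) (by omega))
        (C1 _ r5 r6 (by omega)) (B1 (by unfold MixedRel; omega)) (by norm_num)
    · exact swap4' _ _ _ _ _ _ _ _ _ (C1 _ r1 r2 (by omega)) (C1 _ r3 hmM (by omega))
        (C1 _ r5 r6 (by omega)) (B1c (by unfold MixedRel; omega)) (by norm_num)
  · -- commutes with every hb l
    intro l hl0 hl2'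
    have A2 : ∀ a : ℤ, 1 ≤ a → a ≤ M → MixedRel l a →
        h a * hb l = (-1:ℤ) • (hb l * h a) := fun a ha1 ha2 hr => by
      rw [neg_one_zsmul, hyp.hbanti l a hl0 hl2' ha1 ha2 hr, neg_neg]
    have C2 : ∀ a : ℤ, 1 ≤ a → a ≤ M → ¬MixedRel l a →
        h a * hb l = (1:ℤ) • (hb l * h a) := fun a ha1 ha2 hr => by
      rw [one_zsmul]; exact (hyp.hbcomm l a hl0 hl2' ha1 ha2 hr).symm
    have B2 : (m - l).natAbs = 1 → hb m * hb l = (-1:ℤ) • (hb l * hb m) := fun hd => by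
      rw [neg_one_zsmul]
      exact hyp.hbbanti m l hm0 hm2 hl0 hl2' (by simp only [Int.abs_eq_natAbs]; omega)
    have B2c : m ≠ l → (m - l).natAbs ≠ 1 → hb m * hb l = (1:ℤ) • (hb l * hb m) :=
      fun h1 h2 => by
        rw [one_zsmul]
        exact hyp.hbbcomm m l hm0 hm2 hl0 hl2' h1 (by simp only [Int.abs_eq_natAbs]; omega)
    have S2 : l = m → hb m * hb l = (1:ℤ) • (hb l * hb m) := fun he => by
      subst he; rw [one_zsmul]
    by_cases c1 : l = m
    · exact swap4' _ _ _ _ _ _ _ _ _ (A2 _ r1 r2 (by unfold MixedRel; omega))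
        (A2 _ r3 hmM (by unfold MixedRel; omega)) (C2 _ r5 r6 (by unfold MixedRel; omega))
        (S2 c1) (by norm_num)
    by_cases c2 : l = m-1
    · exact swap4' _ _ _ _ _ _ _ _ _ (A2 _ r1 r2 (by unfold MixedRel; omega))
        (A2 _ r3 hmM (by unfold MixedRel; omega)) (A2 _ r5 r6 (by unfold MixedRel; omega))
        (B2 (by omega)) (by norm_num)
    by_cases c3 : l = m+1
    · exact swap4' _ _ _ _ _ _ _ _ _ (A2 _ r1 r2 (by unfold MixedRel; omega))
        (C2 _ r3 hmM (by unfold MixedRel; omega)) (C2 _ r5 r6 (by unfold MixedRel; omega))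
        (B2 (by omega)) (by norm_num)
    by_cases c4 : l = m-2
    · exact swap4' _ _ _ _ _ _ _ _ _ (A2 _ r1 r2 (by unfold MixedRel; omega))
        (C2 _ r3 hmM (by unfold MixedRel; omega)) (A2 _ r5 r6 (by unfold MixedRel; omega))
        (B2c (by omega) (by omega)) (by norm_num)
    · exact swap4' _ _ _ _ _ _ _ _ _ (C2 _ r1 r2 (by unfold MixedRel; omega))
        (C2 _ r3 hmM (by unfold MixedRel; omega)) (C2 _ r5 r6 (by unfold MixedRel; omega))
        (B2c (by omega) (by omega)) (by norm_num)
  · -- the square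
    have t21 : h (2*m) * h (2*m-3) = h (2*m-3) * h (2*m) :=
      hyp.hcomm _ _ r3 hmM r1 r2 (by simp only [Int.abs_eq_natAbs]; omega)
    have t31 : h (2*m-2) * h (2*m-3) = -(h (2*m-3) * h (2*m-2)) :=
      hyp.hanti _ _ r5 r6 r1 r2 (by simp only [Int.abs_eq_natAbs]; omega)
        (by simp only [Int.abs_eq_natAbs]; omega)
    have t41 : hb m * h (2*m-3) = -(h (2*m-3) * hb m) :=
      hyp.hbanti m _ hm0 hm2 r1 r2 (by unfold MixedRel; omega)
    have t32 : h (2*m-2) * h (2*m) = -(h (2*m) * h (2*m-2)) :=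
      hyp.hanti _ _ r5 r6 r3 hmM (by simp only [Int.abs_eq_natAbs]; omega)
        (by simp only [Int.abs_eq_natAbs]; omega)
    have t42 : hb m * h (2*m) = -(h (2*m) * hb m) :=
      hyp.hbanti m _ hm0 hm2 r3 hmM (by unfold MixedRel; omega)
    have t43 : hb m * h (2*m-2) = h (2*m-2) * hb m :=
      hyp.hbcomm m _ hm0 hm2 r5 r6 (by unfold MixedRel; omega)
    have sq1 := hyp.hsq _ r1 r2
    have sq2 := hyp.hsq _ r3 hmM
    have sq3 := hyp.hsq _ r5 r6
    have sq4 := hyp.hbsq m hm0 hm2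
    have m21 : ∀ t : A, h (2*m) * (h (2*m-3) * t) = h (2*m-3) * (h (2*m) * t) :=
      fun t => by rw [← mul_assoc, t21, mul_assoc]
    have m31 : ∀ t : A, h (2*m-2) * (h (2*m-3) * t) = -(h (2*m-3) * (h (2*m-2) * t)) :=
      fun t => by rw [← mul_assoc, t31, neg_mul, mul_assoc]
    have m41 : ∀ t : A, hb m * (h (2*m-3) * t) = -(h (2*m-3) * (hb m * t)) :=
      fun t => by rw [← mul_assoc, t41, neg_mul, mul_assoc]
    have m32 : ∀ t : A, h (2*m-2) * (h (2*m) * t) = -(h (2*m) * (h (2*m-2) * t)) :=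
      fun t => by rw [← mul_assoc, t32, neg_mul, mul_assoc]
    have m42 : ∀ t : A, hb m * (h (2*m) * t) = -(h (2*m) * (hb m * t)) :=
      fun t => by rw [← mul_assoc, t42, neg_mul, mul_assoc]
    have m43 : ∀ t : A, hb m * (h (2*m-2) * t) = h (2*m-2) * (hb m * t) :=
      fun t => by rw [← mul_assoc, t43, mul_assoc]
    have q1 : ∀ t : A, h (2*m-3) * (h (2*m-3) * t) = (b (2*m-3))^2 • t :=
      fun t => by rw [← mul_assoc, sq1, smul_mul_assoc, one_mul]
    have q2 : ∀ t : A, h (2*m) * (h (2*m) * t) = (b (2*m))^2 • t :=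
      fun t => by rw [← mul_assoc, sq2, smul_mul_assoc, one_mul]
    have q3 : ∀ t : A, h (2*m-2) * (h (2*m-2) * t) = (b (2*m-2))^2 • t :=
      fun t => by rw [← mul_assoc, sq3, smul_mul_assoc, one_mul]
    calc h (2*m-3) * h (2*m) * h (2*m-2) * hb m * (h (2*m-3) * h (2*m) * h (2*m-2) * hb m)
        = h (2*m-3) * (h (2*m) * (h (2*m-2) * (hb m * (h (2*m-3) * (h (2*m) *
            (h (2*m-2) * hb m)))))) := by simp only [mul_assoc]
      _ = ((b (2*m-3))^2 * (b (2*m))^2 * (b (2*m-2))^2 * (bb m)^2) • 1 := by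
          simp only [m21, m31, m41, m32, m42, m43, mul_neg, neg_neg, neg_mul]
          simp only [q1, q2, q3, sq4, smul_smul]
          congr 1
          ring

end FFD
end

section
/- The independence number of the graph G (the maximal cardinality of a set of pairwise non-adjacent vertices) equals ⌊(M+2)/3⌋. -/
namespace FFDGraph

/-- Index pattern for the adjacency of the barred vertex `2m+1` with the plain vertex `l`. -/
def MixedRel (m l : ℤ) : Prop :=
  l = 2 * m - 5 ∨ l = 2 * m - 3 ∨ l = 2 * m - 1 ∨ l = 2 * m + 1 ∨ l = 2 * m ∨ l = 2 * m + 2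

/-- Vertices: `Sum.inl i` is the plain vertex `i`, `Sum.inr m` is the barred vertex
`v̄_{2m+1}`.  Adjacency: plain vertices `i ≠ j` are adjacent iff `1 ≤ |i - j| ≤ 2`;
the barred vertex `v̄_{2m+1}` is adjacent to exactly the plain vertices
`l ∈ {2m-5, 2m-3, 2m-1, 2m+1, 2m, 2m+2}`; two barred vertices `v̄_{2m+1}`, `v̄_{2m'+1}`
are adjacent iff `|m - m'| = 1`. -/
def Adj : ℕ ⊕ ℕ → ℕ ⊕ ℕ → Prop
  | .inl i, .inl j => 1 ≤ |(i : ℤ) - (j : ℤ)| ∧ |(i : ℤ) - (j : ℤ)| ≤ 2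
  | .inl l, .inr m => MixedRel (m : ℤ) (l : ℤ)
  | .inr m, .inl l => MixedRel (m : ℤ) (l : ℤ)
  | .inr m, .inr m' => |(m : ℤ) - (m' : ℤ)| = 1

/-- The vertex set of the frustration graph: plain vertices `1, …, M` and barred vertices
`v̄_{2m+1}` for `2 ≤ m ≤ ⌊M/2⌋`. -/
def memV (M : ℕ) : ℕ ⊕ ℕ → Prop
  | .inl i => 1 ≤ i ∧ i ≤ M
  | .inr m => 2 ≤ m ∧ m ≤ M / 2

lemma adj_inl_iff (i j : ℕ) :
    Adj (.inl i) (.inl j) ↔ 1 ≤ |(i : ℤ) - (j : ℤ)| ∧ |(i : ℤ) - (j : ℤ)| ≤ 2 := Iff.rfl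

lemma adj_plain {i j : ℕ} (h : i = j + 1 ∨ i = j + 2 ∨ j = i + 1 ∨ j = i + 2) :
    Adj (.inl i) (.inl j) := by
  rw [adj_inl_iff]
  rcases h with h | h | h | h <;>
    exact ⟨le_abs.mpr (by omega), abs_le.mpr (by omega)⟩

lemma adj_barred {m m' : ℕ} (h : m = m' + 1 ∨ m' = m + 1) :
    Adj (.inr m) (.inr m') := by
  show |(m : ℤ) - (m' : ℤ)| = 1
  exact (abs_eq (by norm_num)).mpr (by omega)

/-- Block assignment used for the upper bound: each vertex of an independent set `S`
is sent to the index of a block `{3k+1, 3k+2, 3k+3}`. -/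
def fd (S : Finset (ℕ ⊕ ℕ)) : ℕ ⊕ ℕ → ℕ :=
  Sum.elim (fun i => (i - 1) / 3)
    (fun m =>
      if m % 3 = 1 then (2 * m - 2) / 3
      else if m % 3 = 2 then (2 * m - 1) / 3
      else if Sum.inl (2 * m - 2) ∈ S then (2 * m - 6) / 3
      else (2 * m - 3) / 3)

/-- The independence number of the frustration graph of the FFD model
with claws equals `⌊(M + 2)/3⌋`: this value is attained by an independent set, and every
independent set has at most this cardinality. -/
theorem independence_number (M : ℕ) (hM : 5 ≤ M) :
    IsGreatest {n : ℕ | ∃ S : Finset (ℕ ⊕ ℕ),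
        (∀ v ∈ S, memV M v) ∧
        (∀ v ∈ S, ∀ w ∈ S, v ≠ w → ¬Adj v w) ∧
        S.card = n}
      ((M + 2) / 3) := by
  constructor
  · -- the value is attained by {1, 4, 7, …}
    refine ⟨(Finset.range ((M + 2) / 3)).image (fun k => (Sum.inl (3 * k + 1) : ℕ ⊕ ℕ)),
      ?_, ?_, ?_⟩
    · intro v hv
      simp only [Finset.mem_image, Finset.mem_range] at hv
      obtain ⟨k, hk, rfl⟩ := hv
      exact ⟨by omega, by omega⟩
    · intro v hv w hw hne
      simp only [Finset.mem_image, Finset.mem_range] at hv hw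
      obtain ⟨k, hk, rfl⟩ := hv
      obtain ⟨k', hk', rfl⟩ := hw
      have hkk : k ≠ k' := by
        intro h; exact hne (by rw [h])
      intro hadj
      rw [adj_inl_iff] at hadj
      obtain ⟨-, h2⟩ := hadj
      rw [abs_le] at h2
      omega
    · rw [Finset.card_image_of_injective _ (by intro a b h; simp only [Sum.inl.injEq] at h; omega),
        Finset.card_range]
  · -- upper bound
    rintro n ⟨S, hmem, hind, rfl⟩
    have hmaps : ∀ a ∈ S, fd S a ∈ Finset.range ((M + 2) / 3) := by
      intro a ha
      rcases a with i | m
      · have h1 : 1 ≤ i ∧ i ≤ M := hmem _ ha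
        simp only [fd, Sum.elim_inl, Finset.mem_range]
        omega
      · have h1 : 2 ≤ m ∧ m ≤ M / 2 := hmem _ ha
        simp only [fd, Sum.elim_inr]
        split_ifs <;> (simp only [Finset.mem_range]; omega)
    have hinj : Set.InjOn (fd S) S := by
      intro v hv w hw hfe
      rw [Finset.mem_coe] at hv hw
      by_contra hne
      rcases v with i | m <;> rcases w with j | m'
      · -- plain / plain
        have h1 : 1 ≤ i ∧ i ≤ M := hmem _ hv
        have h2 : 1 ≤ j ∧ j ≤ M := hmem _ hw
        have hij : i ≠ j := by intro h; exact hne (by rw [h])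
        simp only [fd, Sum.elim_inl] at hfe
        exact hind _ hv _ hw hne (adj_plain (by omega))
      · -- plain / barred
        have h1 : 1 ≤ i ∧ i ≤ M := hmem _ hv
        have h2 : 2 ≤ m' ∧ m' ≤ M / 2 := hmem _ hw
        simp only [fd, Sum.elim_inl, Sum.elim_inr] at hfe
        split_ifs at hfe with t1 t2 t3
        · exact hind _ hv _ hw hne (show MixedRel _ _ by unfold MixedRel; omega)
        · exact hind _ hv _ hw hne (show MixedRel _ _ by unfold MixedRel; omega)
        · by_cases hi : i = 2 * m' - 4
          · exact hind _ hv _ t3 (by simp only [ne_eq, Sum.inl.injEq]; omega)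
              (adj_plain (by omega))
          · exact hind _ hv _ hw hne (show MixedRel _ _ by unfold MixedRel; omega)
        · by_cases hi : i = 2 * m' - 2
          · exact t3 (by rw [← hi]; exact hv)
          · exact hind _ hv _ hw hne (show MixedRel _ _ by unfold MixedRel; omega)
      · -- barred / plain
        have h1 : 2 ≤ m ∧ m ≤ M / 2 := hmem _ hv
        have h2 : 1 ≤ j ∧ j ≤ M := hmem _ hw
        simp only [fd, Sum.elim_inl, Sum.elim_inr] at hfe
        split_ifs at hfe with t1 t2 t3
        · exact hind _ hv _ hw hne (show MixedRel _ _ by unfold MixedRel; omega)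
        · exact hind _ hv _ hw hne (show MixedRel _ _ by unfold MixedRel; omega)
        · by_cases hj : j = 2 * m - 4
          · exact hind _ hw _ t3 (by simp only [ne_eq, Sum.inl.injEq]; omega)
              (adj_plain (by omega))
          · exact hind _ hv _ hw hne (show MixedRel _ _ by unfold MixedRel; omega)
        · by_cases hj : j = 2 * m - 2
          · exact t3 (by rw [← hj]; exact hw)
          · exact hind _ hv _ hw hne (show MixedRel _ _ by unfold MixedRel; omega)
      · -- barred / barred
        have h1 : 2 ≤ m ∧ m ≤ M / 2 := hmem _ hv
        have h2 : 2 ≤ m' ∧ m' ≤ M / 2 := hmem _ hw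
        have hmm : m ≠ m' := by intro h; exact hne (by rw [h])
        simp only [fd, Sum.elim_inr] at hfe
        split_ifs at hfe
        all_goals try omega
        all_goals try
          exact hind _ hv (Sum.inl (2 * m' - 2)) (by assumption) (by simp)
            (show MixedRel _ _ by unfold MixedRel; omega)
        all_goals try
          exact hind _ hw (Sum.inl (2 * m - 2)) (by assumption) (by simp)
            (show MixedRel _ _ by unfold MixedRel; omega)
        all_goals
          exact hind _ hv _ hw hne (adj_barred (by omega))
    have := Finset.card_le_card_of_injOn (fd S) hmaps hinj
    simpa using this
    
end FFDGraph
end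

section
/- The operators h_1,…,h_{N−2} satisfy the FFD algebra relations: h_m · h_m = b_m² · I; h_m · h_l = − h_l · h_m whenever 1 ≤ |m−l| ≤ 2 (both indices in {1,…,N−2}); and h_m · h_l = h_l · h_m whenever |m−l| > 2. -/
namespace FFDRep

/-- The iterated Kronecker product of a list of `2 × 2` complex matrices, as a
`2^L.length × 2^L.length` matrix. -/
noncomputable def tensorPow :
    (L : List (Matrix (Fin 2) (Fin 2) ℂ)) →
      Matrix (Fin (2 ^ L.length)) (Fin (2 ^ L.length)) ℂ
  | [] => 1
  | a :: l =>
      Matrix.reindex (finProdFinEquiv.trans (finCongr (by simp [pow_succ]; ring)))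
        (finProdFinEquiv.trans (finCongr (by simp [pow_succ]; ring)))
        (Matrix.kroneckerMap (· * ·) a (tensorPow l))

/-- The Pauli matrix `σ^x`. -/
def sigmaX : Matrix (Fin 2) (Fin 2) ℂ := !![0, 1; 1, 0]

/-- The Pauli matrix `σ^z`. -/
def sigmaZ : Matrix (Fin 2) (Fin 2) ℂ := !![1, 0; 0, -1]

/-- `σ_m^α = I₂^{⊗(m-1)} ⊗ σ^α ⊗ I₂^{⊗(N-m)}`, the matrix with the single-site operator
`σ` placed in slot `m` of an `N`-fold Kronecker product of `2 × 2` identity matrices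
(and junk value `0` if `m ∉ {1, …, N}`). -/
noncomputable def pauliAt (N m : ℕ) (σ : Matrix (Fin 2) (Fin 2) ℂ) :
    Matrix (Fin (2 ^ N)) (Fin (2 ^ N)) ℂ :=
  if hm : 1 ≤ m ∧ m ≤ N then
    Matrix.reindex
      (finCongr (by
        obtain ⟨h1, h2⟩ := hm
        have hlen : (List.replicate (m - 1) (1 : Matrix (Fin 2) (Fin 2) ℂ)
            ++ σ :: List.replicate (N - m) 1).length = N := by
          simp
          omega
        rw [hlen]))
      (finCongr (by
        obtain ⟨h1, h2⟩ := hm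
        have hlen : (List.replicate (m - 1) (1 : Matrix (Fin 2) (Fin 2) ℂ)
            ++ σ :: List.replicate (N - m) 1).length = N := by
          simp
          omega
        rw [hlen]))
      (tensorPow (List.replicate (m - 1) 1 ++ σ :: List.replicate (N - m) 1))
  else 0

/-- The generators `h_m = b_m σ_m^z σ_{m+1}^z σ_{m+2}^x` of Fendley's
free-fermions-in-disguise model in its standard spin-chain representation. -/
noncomputable def hGen (N : ℕ) (b : ℕ → ℂ) (m : ℕ) :
    Matrix (Fin (2 ^ N)) (Fin (2 ^ N)) ℂ :=
  b m • (pauliAt N m sigmaZ * pauliAt N (m + 1) sigmaZ * pauliAt N (m + 2) sigmaX)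


/-! ### Auxiliary machinery -/

private abbrev M2 := Matrix (Fin 2) (Fin 2) ℂ

noncomputable def tp : (n : ℕ) → (Fin n → M2) → Matrix (Fin (2 ^ n)) (Fin (2 ^ n)) ℂ
  | 0, _ => 1
  | n + 1, f =>
      Matrix.reindex (finProdFinEquiv.trans (finCongr (by ring)))
        (finProdFinEquiv.trans (finCongr (by ring)))
        (Matrix.kroneckerMap (· * ·) (f 0) (tp n (f ∘ Fin.succ)))

lemma tp_mul : ∀ (n : ℕ) (f g : Fin n → M2),
    tp n f * tp n g = tp n (fun i => f i * g i)
  | 0, f, g => by simp [tp]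
  | n + 1, f, g => by
    show Matrix.reindex _ _ _ * Matrix.reindex _ _ _ = _
    simp only [Matrix.reindex_apply, Matrix.submatrix_mul_equiv]
    rw [← Matrix.mul_kronecker_mul, tp_mul n]
    rfl

lemma tp_one : ∀ n, tp n (fun _ => (1 : M2)) = 1
  | 0 => rfl
  | n + 1 => by
    simp only [tp]
    have : (fun _ => (1 : M2)) ∘ Fin.succ = fun _ : Fin n => (1 : M2) := rfl
    rw [this, tp_one n, Matrix.one_kronecker_one, Matrix.reindex_apply,
      Matrix.submatrix_one_equiv]



lemma tp_update_smul : ∀ (n : ℕ) (f : Fin n → M2) (i : Fin n) (c : ℂ),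
    tp n (Function.update f i (c • f i)) = c • tp n f
  | 0, f, i, c => i.elim0
  | n + 1, f, i, c => by
    induction i using Fin.cases with
    | zero =>
      show Matrix.reindex _ _ _ = _
      rw [Function.update_self]
      have ht : (Function.update f 0 (c • f 0)) ∘ Fin.succ = f ∘ Fin.succ := by
        funext j
        simp [Function.comp_apply, Function.update_of_ne (Fin.succ_ne_zero j)]
      rw [ht, Matrix.smul_kronecker]
      simp only [tp, Matrix.reindex_apply, Matrix.submatrix_smul]
      rfl
    | succ k =>
      show Matrix.reindex _ _ _ = _
      have hh : Function.update f k.succ (c • f k.succ) 0 = f 0 :=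
        Function.update_of_ne (Fin.succ_ne_zero k).symm _ f
      have ht : (Function.update f k.succ (c • f k.succ)) ∘ Fin.succ
          = Function.update (f ∘ Fin.succ) k (c • (f ∘ Fin.succ) k) :=
        Function.update_comp_eq_of_injective f (Fin.succ_injective n) k _
      rw [hh, ht, tp_update_smul n, Matrix.kronecker_smul]
      simp only [tp, Matrix.reindex_apply, Matrix.submatrix_smul]
      rfl



lemma tensorPow_eq_tp : ∀ (L : List M2), tensorPow L = tp L.length L.get
  | [] => rfl
  | a :: l => by
    show Matrix.reindex _ _ _ = tp (l.length + 1) (a :: l).get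
    rw [tensorPow_eq_tp l]
    show _ = Matrix.reindex _ _ _
    congr 1

lemma tp_cast {n n' : ℕ} (h : n = n') (h2 h3 : 2 ^ n = 2 ^ n') (f : Fin n → M2) :
    Matrix.reindex (finCongr h2) (finCongr h3) (tp n f)
      = tp n' (fun i => f (Fin.cast h.symm i)) := by
  subst h
  simp only [finCongr_refl, Equiv.refl]
  rfl



lemma pauliAt_eq {N m : ℕ} (h1 : 1 ≤ m) (h2 : m ≤ N) (σ : M2) :
    pauliAt N m σ
      = tp N (Function.update (fun _ => 1) (⟨m - 1, by omega⟩ : Fin N) σ) := by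
  have hlen : (List.replicate (m - 1) (1 : M2) ++ σ :: List.replicate (N - m) 1).length = N := by
    simp; omega
  rw [pauliAt, dif_pos ⟨h1, h2⟩, tensorPow_eq_tp, tp_cast hlen]
  have hfun : (fun i : Fin N =>
      (List.replicate (m - 1) (1 : M2) ++ σ :: List.replicate (N - m) 1).get
        (Fin.cast hlen.symm i))
      = Function.update (fun _ => (1 : M2)) (⟨m - 1, by omega⟩ : Fin N) σ := by
    funext i
    rw [Function.update_apply]

    have hiv : (Fin.cast hlen.symm i : ℕ) = (i : ℕ) := rfl
    rw [List.get_eq_getElem]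
    by_cases hc : (i : ℕ) = m - 1
    · rw [if_pos (by simp [Fin.ext_iff, hc])]
      rw [List.getElem_append_right (by simp; omega)]
      simp only [List.length_replicate]
      rw [List.getElem_cons]
      rw [dif_pos (by simp [hiv]; omega)]
    · rw [if_neg (by simp [Fin.ext_iff]; omega)]
      rcases Nat.lt_or_ge (i : ℕ) (m - 1) with hlt | hge
      · rw [List.getElem_append_left (by simp [hiv]; omega)]
        simp
      · rw [List.getElem_append_right (by simp [hiv]; omega)]
        rw [List.getElem_cons]
        rw [dif_neg (by simp [hiv]; omega)]
        simp
  rw [hfun]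



lemma pauliAt_mul_same {N m : ℕ} (h1 : 1 ≤ m) (h2 : m ≤ N) (σ τ : M2) :
    pauliAt N m σ * pauliAt N m τ = pauliAt N m (σ * τ) := by
  rw [pauliAt_eq h1 h2, pauliAt_eq h1 h2, pauliAt_eq h1 h2, tp_mul]
  have hfg : (fun i => Function.update (fun _ => (1:M2)) (⟨m - 1, by omega⟩ : Fin N) σ i *
      Function.update (fun _ => (1:M2)) (⟨m - 1, by omega⟩ : Fin N) τ i)
      = Function.update (fun _ => (1:M2)) (⟨m - 1, by omega⟩ : Fin N) (σ * τ) := by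
    funext k
    by_cases hk : k = (⟨m - 1, by omega⟩ : Fin N) <;>
      simp [Function.update_apply, hk]
  rw [hfg]

lemma pauliAt_comm {N m l : ℕ} (h1 : 1 ≤ m) (h2 : m ≤ N) (h3 : 1 ≤ l) (h4 : l ≤ N)
    (hml : m ≠ l) (σ τ : M2) :
    pauliAt N m σ * pauliAt N l τ = pauliAt N l τ * pauliAt N m σ := by
  rw [pauliAt_eq h1 h2, pauliAt_eq h3 h4, tp_mul, tp_mul]
  have hfg : (fun i => Function.update (fun _ => (1:M2)) (⟨m - 1, by omega⟩ : Fin N) σ i *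
      Function.update (fun _ => (1:M2)) (⟨l - 1, by omega⟩ : Fin N) τ i)
      = (fun i => Function.update (fun _ => (1:M2)) (⟨l - 1, by omega⟩ : Fin N) τ i *
      Function.update (fun _ => (1:M2)) (⟨m - 1, by omega⟩ : Fin N) σ i) := by
    funext k
    have hne : (⟨m - 1, by omega⟩ : Fin N) ≠ (⟨l - 1, by omega⟩ : Fin N) := by
      simp only [ne_eq, Fin.mk.injEq]; omega
    have hv : m - 1 ≠ l - 1 := by omega
    by_cases hk : k = (⟨m - 1, by omega⟩ : Fin N) <;>
      by_cases hk' : k = (⟨l - 1, by omega⟩ : Fin N) <;>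
      simp [Function.update_apply, hk, hk', hv, Ne.symm hv]
  rw [hfg]

lemma pauliAt_smul {N m : ℕ} (h1 : 1 ≤ m) (h2 : m ≤ N) (c : ℂ) (σ : M2) :
    pauliAt N m (c • σ) = c • pauliAt N m σ := by
  rw [pauliAt_eq h1 h2, pauliAt_eq h1 h2]
  have : Function.update (fun _ => (1 : M2)) (⟨m - 1, by omega⟩ : Fin N) (c • σ)
      = Function.update (Function.update (fun _ => (1 : M2)) (⟨m - 1, by omega⟩ : Fin N) σ)
        (⟨m - 1, by omega⟩ : Fin N)
        (c • Function.update (fun _ => (1 : M2)) (⟨m - 1, by omega⟩ : Fin N) σ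
          (⟨m - 1, by omega⟩ : Fin N)) := by
    rw [Function.update_self, Function.update_idem]
  rw [this, tp_update_smul]

lemma pauliAt_one {N m : ℕ} (h1 : 1 ≤ m) (h2 : m ≤ N) :
    pauliAt N m 1 = 1 := by
  rw [pauliAt_eq h1 h2, Function.update_eq_self, tp_one]



lemma sc_mul_right {n : ℕ} {A B C : Matrix (Fin n) (Fin n) ℂ} {ε δ : ℂ}
    (h1 : A * B = ε • (B * A)) (h2 : A * C = δ • (C * A)) :
    A * (B * C) = (ε * δ) • (B * C * A) := by
  calc A * (B * C) = (A * B) * C := (mul_assoc _ _ _).symm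
    _ = (ε • (B * A)) * C := by rw [h1]
    _ = ε • (B * (A * C)) := by rw [Matrix.smul_mul, mul_assoc]
    _ = ε • (B * (δ • (C * A))) := by rw [h2]
    _ = (ε * δ) • (B * C * A) := by
        rw [Matrix.mul_smul, smul_smul, mul_assoc]

lemma sc_mul_left {n : ℕ} {A B C : Matrix (Fin n) (Fin n) ℂ} {ε δ : ℂ}
    (h1 : A * C = ε • (C * A)) (h2 : B * C = δ • (C * B)) :
    (A * B) * C = (ε * δ) • (C * (A * B)) := by
  calc (A * B) * C = A * (B * C) := mul_assoc _ _ _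
    _ = A * (δ • (C * B)) := by rw [h2]
    _ = δ • ((A * C) * B) := by rw [Matrix.mul_smul, mul_assoc]
    _ = δ • ((ε • (C * A)) * B) := by rw [h1]
    _ = (ε * δ) • (C * (A * B)) := by
        rw [Matrix.smul_mul, smul_smul, mul_comm δ ε, mul_assoc]

lemma triple_sc {n : ℕ} {A1 A2 A3 B1 B2 B3 : Matrix (Fin n) (Fin n) ℂ}
    {e11 e12 e13 e21 e22 e23 e31 e32 e33 : ℂ}
    (h11 : A1 * B1 = e11 • (B1 * A1)) (h12 : A1 * B2 = e12 • (B2 * A1))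
    (h13 : A1 * B3 = e13 • (B3 * A1)) (h21 : A2 * B1 = e21 • (B1 * A2))
    (h22 : A2 * B2 = e22 • (B2 * A2)) (h23 : A2 * B3 = e23 • (B3 * A2))
    (h31 : A3 * B1 = e31 • (B1 * A3)) (h32 : A3 * B2 = e32 • (B2 * A3))
    (h33 : A3 * B3 = e33 • (B3 * A3)) :
    (A1 * A2 * A3) * (B1 * B2 * B3)
      = (e11 * e12 * e13 * (e21 * e22 * e23) * (e31 * e32 * e33))
          • ((B1 * B2 * B3) * (A1 * A2 * A3)) :=
  sc_mul_left (sc_mul_left (sc_mul_right (sc_mul_right h11 h12) h13)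
    (sc_mul_right (sc_mul_right h21 h22) h23)) (sc_mul_right (sc_mul_right h31 h32) h33)



lemma sigmaZ_sq : sigmaZ * sigmaZ = 1 := by
  rw [sigmaZ, Matrix.mul_fin_two, Matrix.one_fin_two]; norm_num

lemma sigmaX_sq : sigmaX * sigmaX = 1 := by
  rw [sigmaX, Matrix.mul_fin_two, Matrix.one_fin_two]; norm_num

lemma sigmaXZ : sigmaX * sigmaZ = (-1 : ℂ) • (sigmaZ * sigmaX) := by
  ext i j
  fin_cases i <;> fin_cases j <;> simp [sigmaX, sigmaZ, Matrix.mul_apply, Fin.sum_univ_two]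

/-- scomm for distinct sites -/

lemma sc_ne {N m l : ℕ} (h1 : 1 ≤ m) (h2 : m ≤ N) (h3 : 1 ≤ l) (h4 : l ≤ N)
    (hml : m ≠ l) (σ τ : M2) :
    pauliAt N m σ * pauliAt N l τ = (1 : ℂ) • (pauliAt N l τ * pauliAt N m σ) := by
  rw [one_smul, pauliAt_comm h1 h2 h3 h4 hml]

lemma sc_refl {n : ℕ} (A : Matrix (Fin n) (Fin n) ℂ) : A * A = (1 : ℂ) • (A * A) :=
  (one_smul _ _).symm

/-- scomm for X,Z at the same site -/

lemma sc_XZ {N k : ℕ} (h1 : 1 ≤ k) (h2 : k ≤ N) :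
    pauliAt N k sigmaX * pauliAt N k sigmaZ
      = (-1 : ℂ) • (pauliAt N k sigmaZ * pauliAt N k sigmaX) := by
  rw [pauliAt_mul_same h1 h2, pauliAt_mul_same h1 h2, sigmaXZ,
    pauliAt_smul h1 h2]



lemma hGen_pair {N : ℕ} (b : ℕ → ℂ) {m l : ℕ} (E : ℂ)
    (hsc : (pauliAt N m sigmaZ * pauliAt N (m+1) sigmaZ * pauliAt N (m+2) sigmaX)
        * (pauliAt N l sigmaZ * pauliAt N (l+1) sigmaZ * pauliAt N (l+2) sigmaX)
      = E • ((pauliAt N l sigmaZ * pauliAt N (l+1) sigmaZ * pauliAt N (l+2) sigmaX)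
        * (pauliAt N m sigmaZ * pauliAt N (m+1) sigmaZ * pauliAt N (m+2) sigmaX))) :
    hGen N b m * hGen N b l = E • (hGen N b l * hGen N b m) := by
  simp only [hGen, Matrix.smul_mul, Matrix.mul_smul, hsc, smul_smul]
  congr 1
  ring

lemma sq_helper {n : ℕ} (A B C : Matrix (Fin n) (Fin n) ℂ)
    (hBA : B * A = A * B) (hCA : C * A = A * C) (hCB : C * B = B * C)
    (hA : A * A = 1) (hB : B * B = 1) (hC : C * C = 1) :
    (A * B * C) * (A * B * C) = 1 := by
  have hCD : C * (A * B) = (A * B) * C := by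
    rw [← mul_assoc, hCA, mul_assoc, hCB, ← mul_assoc]
  calc (A * B * C) * (A * B * C) = (A * B) * ((C * (A * B)) * C) := by
        simp only [mul_assoc]
    _ = (A * B) * ((A * B) * (C * C)) := by rw [hCD]; simp only [mul_assoc]
    _ = (A * B) * (A * B) := by rw [hC, mul_one]
    _ = A * ((B * A) * B) := by simp only [mul_assoc]
    _ = A * (A * (B * B)) := by rw [hBA, mul_assoc]
    _ = A * A := by rw [hB, mul_one]
    _ = 1 := hA

lemma hGen_sq {N : ℕ} (b : ℕ → ℂ) {m : ℕ} (h1 : 1 ≤ m) (h2 : m + 2 ≤ N) :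
    hGen N b m * hGen N b m = (b m) ^ 2 • (1 : Matrix (Fin (2 ^ N)) (Fin (2 ^ N)) ℂ) := by
  have hP : (pauliAt N m sigmaZ * pauliAt N (m+1) sigmaZ * pauliAt N (m+2) sigmaX)
      * (pauliAt N m sigmaZ * pauliAt N (m+1) sigmaZ * pauliAt N (m+2) sigmaX) = 1 :=
    sq_helper _ _ _
      (pauliAt_comm (by omega) (by omega) (by omega) (by omega) (by omega) _ _)
      (pauliAt_comm (by omega) (by omega) (by omega) (by omega) (by omega) _ _)
      (pauliAt_comm (by omega) (by omega) (by omega) (by omega) (by omega) _ _)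
      (by rw [pauliAt_mul_same (by omega) (by omega), sigmaZ_sq,
        pauliAt_one (by omega) (by omega)])
      (by rw [pauliAt_mul_same (by omega) (by omega), sigmaZ_sq,
        pauliAt_one (by omega) (by omega)])
      (by rw [pauliAt_mul_same (by omega) (by omega), sigmaX_sq,
        pauliAt_one (by omega) (by omega)])
  simp only [hGen, Matrix.smul_mul, Matrix.mul_smul, hP, smul_smul, sq]

lemma anti_case1 {N : ℕ} (b : ℕ → ℂ) {m : ℕ} (h1 : 1 ≤ m) (h2 : m + 3 ≤ N) :
    hGen N b m * hGen N b (m+1) = -(hGen N b (m+1) * hGen N b m) := by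
  have H := hGen_pair (N := N) b (m := m) (l := m+1) _
    (triple_sc
      (sc_ne (by omega) (by omega) (by omega) (by omega) (by omega) sigmaZ sigmaZ)
      (sc_ne (by omega) (by omega) (by omega) (by omega) (by omega) sigmaZ sigmaZ)
      (sc_ne (by omega) (by omega) (by omega) (by omega) (by omega) sigmaZ sigmaX)
      (sc_refl _)
      (sc_ne (by omega) (by omega) (by omega) (by omega) (by omega) sigmaZ sigmaZ)
      (sc_ne (by omega) (by omega) (by omega) (by omega) (by omega) sigmaZ sigmaX)
      (sc_ne (by omega) (by omega) (by omega) (by omega) (by omega) sigmaX sigmaZ)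
      (sc_XZ (by omega) (by omega))
      (sc_ne (by omega) (by omega) (by omega) (by omega) (by omega) sigmaX sigmaX))
  rw [H]
  norm_num

lemma anti_case2 {N : ℕ} (b : ℕ → ℂ) {m : ℕ} (h1 : 1 ≤ m) (h2 : m + 4 ≤ N) :
    hGen N b m * hGen N b (m+2) = -(hGen N b (m+2) * hGen N b m) := by
  have H := hGen_pair (N := N) b (m := m) (l := m+2) _
    (triple_sc
      (sc_ne (by omega) (by omega) (by omega) (by omega) (by omega) sigmaZ sigmaZ)
      (sc_ne (by omega) (by omega) (by omega) (by omega) (by omega) sigmaZ sigmaZ)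
      (sc_ne (by omega) (by omega) (by omega) (by omega) (by omega) sigmaZ sigmaX)
      (sc_ne (by omega) (by omega) (by omega) (by omega) (by omega) sigmaZ sigmaZ)
      (sc_ne (by omega) (by omega) (by omega) (by omega) (by omega) sigmaZ sigmaZ)
      (sc_ne (by omega) (by omega) (by omega) (by omega) (by omega) sigmaZ sigmaX)
      (sc_XZ (by omega) (by omega))
      (sc_ne (by omega) (by omega) (by omega) (by omega) (by omega) sigmaX sigmaZ)
      (sc_ne (by omega) (by omega) (by omega) (by omega) (by omega) sigmaX sigmaX))
  rw [H]
  norm_num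

lemma comm_far {N : ℕ} (b : ℕ → ℂ) {m l : ℕ} (h1 : 1 ≤ m) (h2 : l + 2 ≤ N)
    (h3 : m + 3 ≤ l) :
    hGen N b m * hGen N b l = hGen N b l * hGen N b m := by
  have H := hGen_pair (N := N) b (m := m) (l := l) _
    (triple_sc
      (sc_ne (by omega) (by omega) (by omega) (by omega) (by omega) sigmaZ sigmaZ)
      (sc_ne (by omega) (by omega) (by omega) (by omega) (by omega) sigmaZ sigmaZ)
      (sc_ne (by omega) (by omega) (by omega) (by omega) (by omega) sigmaZ sigmaX)
      (sc_ne (by omega) (by omega) (by omega) (by omega) (by omega) sigmaZ sigmaZ)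
      (sc_ne (by omega) (by omega) (by omega) (by omega) (by omega) sigmaZ sigmaZ)
      (sc_ne (by omega) (by omega) (by omega) (by omega) (by omega) sigmaZ sigmaX)
      (sc_ne (by omega) (by omega) (by omega) (by omega) (by omega) sigmaX sigmaZ)
      (sc_ne (by omega) (by omega) (by omega) (by omega) (by omega) sigmaX sigmaZ)
      (sc_ne (by omega) (by omega) (by omega) (by omega) (by omega) sigmaX sigmaX))
  rw [H]
  norm_num

/-- The operators `h_1, …, h_{N-2}` satisfy the FFD algebra relations:
`h_m² = b_m² I`, `h_m h_l = -h_l h_m` for `1 ≤ |m - l| ≤ 2` and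
`h_m h_l = h_l h_m` for `|m - l| > 2`. -/
theorem pauli_representation_satisfies_FFD_algebra
    (N : ℕ) (hN : 3 ≤ N) (b : ℕ → ℂ) :
    (∀ m : ℕ, 1 ≤ m → m ≤ N - 2 →
      hGen N b m * hGen N b m
        = (b m) ^ 2 • (1 : Matrix (Fin (2 ^ N)) (Fin (2 ^ N)) ℂ)) ∧
    (∀ m l : ℕ, 1 ≤ m → m ≤ N - 2 → 1 ≤ l → l ≤ N - 2 →
      1 ≤ |(m : ℤ) - (l : ℤ)| → |(m : ℤ) - (l : ℤ)| ≤ 2 →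
      hGen N b m * hGen N b l = -(hGen N b l * hGen N b m)) ∧
    (∀ m l : ℕ, 1 ≤ m → m ≤ N - 2 → 1 ≤ l → l ≤ N - 2 →
      2 < |(m : ℤ) - (l : ℤ)| →
      hGen N b m * hGen N b l = hGen N b l * hGen N b m) := by
  refine ⟨fun m hm1 hm2 => hGen_sq b hm1 (by omega), ?_, ?_⟩
  · intro m l hm1 hm2 hl1 hl2 hd1 hd2
    have hcase : l = m + 1 ∨ l = m + 2 ∨ m = l + 1 ∨ m = l + 2 := by
      rcases abs_cases ((m : ℤ) - (l : ℤ)) with ⟨he, _⟩ | ⟨he, _⟩ <;> omega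
    rcases hcase with rfl | rfl | hm | hm
    · exact anti_case1 b hm1 (by omega)
    · exact anti_case2 b hm1 (by omega)
    · subst hm
      rw [anti_case1 b hl1 (by omega), neg_neg]
    · subst hm
      rw [anti_case2 b hl1 (by omega), neg_neg]
  · intro m l hm1 hm2 hl1 hl2 hd
    have hcase : m + 3 ≤ l ∨ l + 3 ≤ m := by
      rcases abs_cases ((m : ℤ) - (l : ℤ)) with ⟨he, _⟩ | ⟨he, _⟩ <;> omega
    rcases hcase with h | h
    · exact comm_far b hm1 (by omega) h
    · exact (comm_far b hl1 (by omega) h).symm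

end FFDRep
end
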